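/- arXiv:1906.10358 — 3 statements merged into one kernel-verified Lean document; each statement's English description precedes it below -/
import Mathlib

section
/- Let N ≥ 2. For j = 1, ..., N define O_j ⊆ SU(N) as the set of V whose eigenvalue labeling λ(V) satisfies the strict inequality at position j, i.e., λ_j(V) > λ_{j+1}(V) if 1 ≤ j ≤ N−1, and λ_N(V) > λ_1(V) − 1 if j = N. Then each O_j is an open subset of SU(N), and the union O_1 ∪ O_2 ∪ ... ∪ O_N equals SU(N). -/
set_option maxHeartbeats 1000000
set_option synthInstance.maxHeartbeats 1000000

open Polynomial Filter Topology

namespace OCA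

noncomputable def e (x : ℝ) : ℂ := Complex.exp (2 * Real.pi * Complex.I * x)

lemma e_eq_e {x y : ℝ} (h : e x = e y) : ∃ k : ℤ, x = y + k := by
  rw [e, e, Complex.exp_eq_exp_iff_exists_int] at h
  obtain ⟨k, hk⟩ := h
  refine ⟨k, ?_⟩
  have h2 : (2 * (Real.pi : ℂ) * Complex.I) ≠ 0 := by
    simp [Real.pi_ne_zero, Complex.I_ne_zero, Complex.ofReal_eq_zero]
  have h3 : (2 * (Real.pi : ℂ) * Complex.I) * x = (2 * (Real.pi : ℂ) * Complex.I) * (y + k) := by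
    rw [hk]; ring
  have h4 := mul_left_cancel₀ h2 h3
  exact_mod_cast h4

lemma exists_perm_comp {α β : Type*} [Fintype α] [DecidableEq α] [DecidableEq β]
    (f g : α → β)
    (h : Multiset.map f Finset.univ.val = Multiset.map g Finset.univ.val) :
    ∃ σ : Equiv.Perm α, ∀ i, f (σ i) = g i := by
  have hfib : ∀ b : β, Fintype.card {a // g a = b} = Fintype.card {a // f a = b} := by
    intro b
    have hc := congrArg (Multiset.count b) h
    rw [Multiset.count_map, Multiset.count_map] at hc
    rw [Fintype.card_subtype, Fintype.card_subtype]
    have key : ∀ u : α → β, (Finset.univ.filter fun a => u a = b).card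
        = Multiset.card (Multiset.filter (fun a => b = u a) Finset.univ.val) := by
      intro u
      rw [Finset.card_def, Finset.filter_val]
      congr 1
      exact Multiset.filter_congr (fun x _ => by constructor <;> (intro h; exact h.symm))
    rw [key, key, hc]
  exact ⟨Equiv.ofFiberEquiv (fun b => Fintype.equivOfCardEq (hfib b)),
    fun i => Equiv.ofFiberEquiv_map _ i⟩

lemma eq_of_sorted_multiset {N : ℕ} (f g : Fin N → ℝ)
    (hf : ∀ i j : Fin N, i ≤ j → f j ≤ f i) (hg : ∀ i j : Fin N, i ≤ j → g j ≤ g i)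
    (h : Multiset.map f Finset.univ.val = Multiset.map g Finset.univ.val) : f = g := by
  rw [Fin.univ_val_map, Fin.univ_val_map, Multiset.coe_eq_coe] at h
  have hs : ∀ u : Fin N → ℝ, (∀ i j : Fin N, i ≤ j → u j ≤ u i) →
      (List.ofFn u).Pairwise (· ≥ ·) := by
    intro u hu
    rw [List.pairwise_ofFn]
    intro i j hij
    exact hu i j (le_of_lt hij)
  exact List.ofFn_injective (h.eq_of_pairwise (fun a b _ _ h1 h2 => le_antisymm h2 h1) (hs f hf) (hs g hg))

lemma eval_charpoly {N : ℕ} (A : Matrix (Fin N) (Fin N) ℂ) (z : ℂ) :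
    (Matrix.charpoly A).eval z = (z • (1 : Matrix (Fin N) (Fin N) ℂ) - A).det := by
  rw [Matrix.charpoly]
  have h0 : (Matrix.charmatrix A).det.eval z
      = Polynomial.evalRingHom z (Matrix.charmatrix A).det := rfl
  rw [h0, RingHom.map_det]
  congr 1
  ext i j
  by_cases hij : i = j
  · subst hij
    simp [Matrix.charmatrix_apply_eq, Matrix.sub_apply, Matrix.smul_apply,
      Matrix.one_apply_eq, smul_eq_mul]
  · simp [Matrix.charmatrix_apply_ne _ _ _ hij, Matrix.sub_apply, Matrix.smul_apply,
      Matrix.one_apply_ne hij, smul_eq_mul]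

lemma map_univ_perm {N : ℕ} (τ : Equiv.Perm (Fin N)) :
    Multiset.map (⇑τ) Finset.univ.val = Finset.univ.val := by
  rw [← Equiv.coe_toEmbedding, ← Finset.map_val, Finset.map_univ_equiv]

lemma lab_uniq {N : ℕ} (hN : 0 < N) (f g : Fin N → ℝ)
    (hfs : ∑ i, f i = 0) (hfm : ∀ i j : Fin N, i ≤ j → f j ≤ f i)
    (hfw : f ⟨0, hN⟩ - 1 ≤ f ⟨N - 1, by omega⟩)
    (hgs : ∑ i, g i = 0) (hgm : ∀ i j : Fin N, i ≤ j → g j ≤ g i)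
    (hgw : g ⟨0, hN⟩ - 1 ≤ g ⟨N - 1, by omega⟩)
    (h : Multiset.map (fun i => e (f i)) Finset.univ.val
       = Multiset.map (fun i => e (g i)) Finset.univ.val) :
    f = g := by
  classical
  obtain ⟨σ, hσ⟩ := exists_perm_comp _ _ h
  have hex : ∀ i, ∃ k : ℤ, f (σ i) = g i + k := fun i => e_eq_e (hσ i)
  choose n hn using hex
  set M := f ⟨0, hN⟩ with hMdef
  set m := f ⟨N - 1, by omega⟩ with hmdef
  set Mg := g ⟨0, hN⟩ with hMgdef
  set mg := g ⟨N - 1, by omega⟩ with hmgdef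
  have hfub : ∀ i, f i ≤ M := fun i => hfm _ i (by simp [Fin.le_def])
  have hflb : ∀ i, m ≤ f i := fun i => hfm i _ (by rw [Fin.le_def]; have := i.is_lt; simp; omega)
  have hgub : ∀ i, g i ≤ Mg := fun i => hgm _ i (by simp [Fin.le_def])
  have hglb : ∀ i, mg ≤ g i := fun i => hgm i _ (by rw [Fin.le_def]; have := i.is_lt; simp; omega)
  have hfwin : M - m ≤ 1 := by linarith
  have hgwin : Mg - mg ≤ 1 := by linarith
  -- sum of integer shifts is zero
  have hsum : ∑ i, (n i : ℝ) = 0 := by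
    have h1 : ∑ i, f (σ i) = 0 := by rw [Equiv.sum_comp σ f]; exact hfs
    have h2 : ∑ i, f (σ i) = ∑ i, (g i + (n i : ℝ)) :=
      Finset.sum_congr rfl fun i _ => hn i
    rw [Finset.sum_add_distrib, hgs] at h2
    linarith
  have hsumZ : ∑ i, n i = 0 := by exact_mod_cast (by push_cast; exact hsum : ((∑ i, n i : ℤ) : ℝ) = 0)
  -- key pairwise structure
  have key : ∀ i j, 0 < n i → n j < 0 →
      n i = 1 ∧ n j = -1 ∧ g i = mg ∧ g j = Mg ∧ f (σ i) = Mg ∧ f (σ j) = mg := by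
    intro i j hi hj
    have hi1 : (1 : ℝ) ≤ (n i : ℝ) := by exact_mod_cast hi
    have hj1 : (n j : ℝ) ≤ -1 := by exact_mod_cast (by omega : n j ≤ -1)
    have hni := hn i
    have hnj := hn j
    have hfi := hfub (σ i); have hfi' := hflb (σ i)
    have hfj := hfub (σ j); have hfj' := hflb (σ j)
    have hgi := hgub i; have hgi' := hglb i
    have hgj := hgub j; have hgj' := hglb j
    have hni1 : n i = 1 := by
      have : (n i : ℝ) ≤ 1 := by linarith
      have : n i ≤ 1 := by exact_mod_cast this
      omega
    have hnj1 : n j = -1 := by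
      have : (-1 : ℝ) ≤ (n j : ℝ) := by linarith
      have : -1 ≤ n j := by exact_mod_cast this
      omega
    rw [hni1] at hni; rw [hnj1] at hnj
    push_cast at hni hnj
    refine ⟨hni1, hnj1, by linarith, by linarith, by linarith, by linarith⟩
  by_cases hall : ∀ i, n i = 0
  · have hgf : ∀ i, g i = f (σ i) := fun i => by
      have := hn i; rw [hall i] at this; push_cast at this; linarith
    refine eq_of_sorted_multiset f g hfm hgm ?_
    calc Multiset.map f Finset.univ.val
        = Multiset.map f (Multiset.map (⇑σ) Finset.univ.val) := by rw [map_univ_perm]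
      _ = Multiset.map (fun i => f (σ i)) Finset.univ.val := by rw [Multiset.map_map]; rfl
      _ = Multiset.map g Finset.univ.val := Multiset.map_congr rfl fun i _ => (hgf i).symm
  · push_neg at hall
    obtain ⟨i₀, hi₀⟩ := hall
    have hpos : ∃ i, 0 < n i := by
      by_contra hc
      push_neg at hc
      have := (Finset.sum_eq_zero_iff_of_nonpos (fun i _ => hc i)).mp hsumZ
      exact hi₀ (this i₀ (Finset.mem_univ _))
    have hneg : ∃ j, n j < 0 := by
      by_contra hc
      push_neg at hc
      have := (Finset.sum_eq_zero_iff_of_nonneg (fun i _ => hc i)).mp hsumZ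
      exact hi₀ (this i₀ (Finset.mem_univ _))
    obtain ⟨ip, hip⟩ := hpos
    obtain ⟨jn, hjn⟩ := hneg
    have hP : ∀ i, n i = 1 → g i = mg ∧ f (σ i) = Mg := by
      intro i h1
      have := key i jn (by omega) hjn
      exact ⟨this.2.2.1, this.2.2.2.2.1⟩
    have hQ : ∀ j, n j = -1 → g j = Mg ∧ f (σ j) = mg := by
      intro j h1
      have := key ip j hip (by omega)
      exact ⟨this.2.2.2.1, this.2.2.2.2.2⟩
    have htri : ∀ i, n i = 1 ∨ n i = 0 ∨ n i = -1 := by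
      intro i
      rcases lt_trichotomy (n i) 0 with hh | hh | hh
      · exact Or.inr (Or.inr (key ip i hip hh).2.1)
      · exact Or.inr (Or.inl hh)
      · exact Or.inl (key i jn hh hjn).1
    set Pf : Finset (Fin N) := Finset.univ.filter (fun i => n i = 1) with hPf
    set Qf : Finset (Fin N) := Finset.univ.filter (fun i => n i = -1) with hQf
    have hcard : Pf.card = Qf.card := by
      have hsplit : ∑ i, n i = ∑ i ∈ Pf, n i + ∑ i ∈ Qf, n i := by
        rw [← Finset.sum_filter_add_sum_filter_not Finset.univ (fun i => n i = 1) n]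
        congr 1
        rw [← Finset.sum_filter_add_sum_filter_not (Finset.univ.filter fun i => ¬ n i = 1)
          (fun i => n i = -1) n]
        have h1 : (Finset.univ.filter fun i => ¬ n i = 1).filter (fun i => n i = -1) = Qf := by
          ext x
          simp only [hQf, Finset.filter_filter, Finset.mem_filter, Finset.mem_univ, true_and]
          omega
        have h2 : ∑ i ∈ (Finset.univ.filter fun i => ¬ n i = 1).filter (fun i => ¬ n i = -1), n i
            = 0 := by
          apply Finset.sum_eq_zero
          intro x hx
          simp only [Finset.mem_filter] at hx
          rcases htri x with h | h | h
          · exact absurd h hx.1.2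
          · exact h
          · exact absurd h hx.2
        rw [h1, h2, add_zero]
      have hPsum : ∑ i ∈ Pf, n i = Pf.card := by
        rw [Finset.sum_congr rfl (fun i hi => (Finset.mem_filter.mp hi).2)]
        simp
        rfl
      have hQsum : ∑ i ∈ Qf, n i = -Qf.card := by
        rw [Finset.sum_congr rfl (fun i hi => (Finset.mem_filter.mp hi).2)]
        simp
        rfl
      rw [hsumZ, hPsum, hQsum] at hsplit
      omega
    have e' : {x // x ∈ Pf} ≃ {x // x ∈ Qf} :=
      Fintype.equivOfCardEq (by rw [Fintype.card_coe, Fintype.card_coe, hcard])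
    have hPQ : ∀ i, i ∈ Pf → i ∉ Qf := by
      intro i hi hqi
      rw [hPf, Finset.mem_filter] at hi
      rw [hQf, Finset.mem_filter] at hqi
      omega
    let t : Fin N → Fin N := fun i =>
      if h : i ∈ Pf then (e' ⟨i, h⟩ : Fin N)
      else if h : i ∈ Qf then (e'.symm ⟨i, h⟩ : Fin N) else i
    have htPmem : ∀ i (h : i ∈ Pf), t i ∈ Qf := by
      intro i h; simp only [t]; rw [dif_pos h]; exact (e' ⟨i, h⟩).2
    have htQmem : ∀ i (h : i ∉ Pf) (h2 : i ∈ Qf), t i ∈ Pf := by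
      intro i h h2; simp only [t]; rw [dif_neg h, dif_pos h2]; exact (e'.symm ⟨i, h2⟩).2
    have hinv : ∀ i, t (t i) = i := by
      intro i
      by_cases hPc : i ∈ Pf
      · have h1 : t i ∈ Qf := htPmem i hPc
        have h2 : t i ∉ Pf := fun hc => hPQ _ hc h1
        have h3 : t i = (e' ⟨i, hPc⟩ : Fin N) := by simp only [t]; rw [dif_pos hPc]
        simp only [t]
        rw [dif_neg h2, dif_pos h1]
        have h4 : (⟨t i, h1⟩ : {x // x ∈ Qf}) = e' ⟨i, hPc⟩ := by
          exact Subtype.ext h3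
        rw [h4, Equiv.symm_apply_apply]
      · by_cases hQc : i ∈ Qf
        · have h1 : t i ∈ Pf := htQmem i hPc hQc
          have h3 : t i = (e'.symm ⟨i, hQc⟩ : Fin N) := by
            simp only [t]; rw [dif_neg hPc, dif_pos hQc]
          simp only [t]
          rw [dif_pos h1]
          have h4 : (⟨t i, h1⟩ : {x // x ∈ Pf}) = e'.symm ⟨i, hQc⟩ := by
            exact Subtype.ext h3
          rw [h4, Equiv.apply_symm_apply]
        · have h3 : t i = i := by simp only [t]; rw [dif_neg hPc, dif_neg hQc]
          rw [h3]; simp only [t]; rw [dif_neg hPc, dif_neg hQc]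
    let τ : Equiv.Perm (Fin N) := ⟨t, t, hinv, hinv⟩
    have hgt : ∀ i, g i = f (σ (t i)) := by
      intro i
      rcases htri i with h1 | h1 | h1
      · have hiP : i ∈ Pf := by rw [hPf, Finset.mem_filter]; exact ⟨Finset.mem_univ _, h1⟩
        have h2 : t i ∈ Qf := htPmem i hiP
        rw [hQf, Finset.mem_filter] at h2
        rw [(hP i h1).1, (hQ _ h2.2).2]
      · have hiP : i ∉ Pf := by
          simp only [hPf, Finset.mem_filter, Finset.mem_univ, true_and]
          omega
        have hiQ : i ∉ Qf := by
          simp only [hQf, Finset.mem_filter, Finset.mem_univ, true_and]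
          omega
        have ht : t i = i := by simp only [t]; rw [dif_neg hiP, dif_neg hiQ]
        rw [ht]
        have := hn i
        rw [h1] at this
        push_cast at this
        linarith
      · have hiQ : i ∈ Qf := by
          simp only [hQf, Finset.mem_filter, Finset.mem_univ, true_and]
          exact h1
        have hiP : i ∉ Pf := by
          simp only [hPf, Finset.mem_filter, Finset.mem_univ, true_and]
          omega
        have h2 : t i ∈ Pf := htQmem i hiP hiQ
        rw [hPf, Finset.mem_filter] at h2
        rw [(hQ i h1).1, (hP _ h2.2).2]
    refine eq_of_sorted_multiset f g hfm hgm ?_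
    calc Multiset.map f Finset.univ.val
        = Multiset.map f (Multiset.map (⇑σ) Finset.univ.val) := by rw [map_univ_perm]
      _ = Multiset.map (fun i => f (σ i)) Finset.univ.val := by rw [Multiset.map_map]; rfl
      _ = Multiset.map (fun i => f (σ i)) (Multiset.map (⇑τ) Finset.univ.val) := by
          rw [map_univ_perm]
      _ = Multiset.map (fun i => f (σ (t i))) Finset.univ.val := by rw [Multiset.map_map]; rfl
      _ = Multiset.map g Finset.univ.val := Multiset.map_congr rfl fun i _ => (hgt i).symm

lemma isOpen_aux {N : ℕ} (hN : 0 < N)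
    (lab : Matrix.specialUnitaryGroup (Fin N) ℂ → Fin N → ℝ)
    (hlab : ∀ V : Matrix.specialUnitaryGroup (Fin N) ℂ,
      (∑ i, lab V i = 0) ∧
      (∀ i j : Fin N, i ≤ j → lab V j ≤ lab V i) ∧
      (lab V ⟨0, hN⟩ - 1 ≤ lab V ⟨N - 1, by omega⟩) ∧
      Matrix.charpoly (V : Matrix (Fin N) (Fin N) ℂ) =
        ∏ i, (Polynomial.X -
          Polynomial.C (Complex.exp (2 * Real.pi * Complex.I * (lab V i)))))
    (a b : Fin N) (c : ℝ) :
    IsOpen {V : Matrix.specialUnitaryGroup (Fin N) ℂ | lab V a + c < lab V b} := by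
  haveI : FirstCountableTopology (Matrix (Fin N) (Fin N) ℂ) :=
    inferInstanceAs (FirstCountableTopology (Fin N → Fin N → ℂ))
  rw [← isClosed_compl_iff]
  have hcompl : {V : Matrix.specialUnitaryGroup (Fin N) ℂ | lab V a + c < lab V b}ᶜ
      = {V : Matrix.specialUnitaryGroup (Fin N) ℂ | lab V b ≤ lab V a + c} := by
    ext V; simp [not_lt]
  rw [hcompl]
  apply isClosed_of_closure_subset
  intro V₀ hV₀
  rw [mem_closure_iff_seq_limit] at hV₀
  obtain ⟨V, hVmem, hVlim⟩ := hV₀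
  -- uniform bound on labels
  have hbound : ∀ (W : Matrix.specialUnitaryGroup (Fin N) ℂ) (i : Fin N),
      -1 ≤ lab W i ∧ lab W i ≤ 1 := by
    intro W i
    obtain ⟨hs, hm, hw, -⟩ := hlab W
    have hub : ∀ k, lab W k ≤ lab W ⟨0, hN⟩ := fun k => hm _ k (by simp [Fin.le_def])
    have hlb : ∀ k, lab W ⟨N - 1, by omega⟩ ≤ lab W k := fun k =>
      hm k _ (by rw [Fin.le_def]; have := k.is_lt; simp; omega)
    have hNpos : (0 : ℝ) < N := by exact_mod_cast hN
    have h1 : (0 : ℝ) ≤ N * lab W ⟨0, hN⟩ := by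
      have := Finset.sum_le_card_nsmul Finset.univ (lab W) (lab W ⟨0, hN⟩)
        (fun k _ => hub k)
      rw [hs, Finset.card_univ, Fintype.card_fin, nsmul_eq_mul] at this
      exact this
    have h2 : N * lab W ⟨N - 1, by omega⟩ ≤ 0 := by
      have := Finset.card_nsmul_le_sum Finset.univ (lab W) (lab W ⟨N - 1, by omega⟩)
        (fun k _ => hlb k)
      rw [hs, Finset.card_univ, Fintype.card_fin, nsmul_eq_mul] at this
      exact this
    have h3 : 0 ≤ lab W ⟨0, hN⟩ := nonneg_of_mul_nonneg_right h1 hNpos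
    have h4 : lab W ⟨N - 1, by omega⟩ ≤ 0 := nonpos_of_mul_nonpos_right h2 hNpos
    constructor
    · have := hlb i; linarith
    · have := hub i; linarith
  have hmem2 : ∀ k : ℕ, lab (V k) ∈ Set.Icc (fun _ : Fin N => (-1 : ℝ)) (fun _ => 1) := by
    intro k
    rw [Set.mem_Icc]
    exact ⟨fun i => (hbound _ i).1, fun i => (hbound _ i).2⟩
  obtain ⟨μ, hμmem, φ, hφ, hlim⟩ :=
    (isCompact_Icc (a := fun _ : Fin N => (-1 : ℝ)) (b := fun _ => 1)).tendsto_subseq hmem2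
  have hcoord : ∀ i : Fin N, Tendsto (fun k => lab (V (φ k)) i) atTop (𝓝 (μ i)) :=
    fun i => tendsto_pi_nhds.mp hlim i
  have hVφ : Tendsto (fun k => V (φ k)) atTop (𝓝 V₀) := hVlim.comp hφ.tendsto_atTop
  have hμs : ∑ i, μ i = 0 := by
    have h1 : Tendsto (fun k => ∑ i, lab (V (φ k)) i) atTop (𝓝 (∑ i, μ i)) :=
      tendsto_finset_sum _ fun i _ => hcoord i
    have h2 : (fun k => ∑ i, lab (V (φ k)) i) = fun _ => (0 : ℝ) :=
      funext fun k => (hlab _).1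
    rw [h2] at h1
    exact tendsto_nhds_unique h1 tendsto_const_nhds
  have hμm : ∀ i j : Fin N, i ≤ j → μ j ≤ μ i := fun i j hij =>
    le_of_tendsto_of_tendsto' (hcoord j) (hcoord i) fun k => (hlab _).2.1 i j hij
  have hμw : μ ⟨0, hN⟩ - 1 ≤ μ ⟨N - 1, by omega⟩ :=
    le_of_tendsto_of_tendsto' ((hcoord _).sub_const 1) (hcoord _) fun k => (hlab _).2.2.1
  -- limit of characteristic polynomials
  have heval : ∀ (W : Matrix.specialUnitaryGroup (Fin N) ℂ) (z : ℂ),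
      (z • (1 : Matrix (Fin N) (Fin N) ℂ) - (W : Matrix (Fin N) (Fin N) ℂ)).det
        = ∏ i, (z - e (lab W i)) := by
    intro W z
    rw [← eval_charpoly, (hlab W).2.2.2]
    rw [Polynomial.eval_prod]
    exact Finset.prod_congr rfl fun i _ => by simp [e]
  have hdet : ∀ z : ℂ, (∏ i, (z - e (lab V₀ i))) = ∏ i, (z - e (μ i)) := by
    intro z
    have hcont : Continuous fun A : Matrix (Fin N) (Fin N) ℂ =>
        (z • (1 : Matrix (Fin N) (Fin N) ℂ) - A).det :=
      (continuous_const.sub continuous_id).matrix_det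
    have hc2 : Tendsto
        (fun k => (z • (1 : Matrix (Fin N) (Fin N) ℂ) - ((V (φ k) : Matrix (Fin N) (Fin N) ℂ))).det)
        atTop (𝓝 ((z • (1 : Matrix (Fin N) (Fin N) ℂ) - (V₀ : Matrix (Fin N) (Fin N) ℂ)).det)) :=
      (hcont.tendsto _).comp ((continuous_subtype_val.tendsto _).comp hVφ)
    have hc2' : Tendsto (fun k => ∏ i, (z - e (lab (V (φ k)) i))) atTop
        (𝓝 ((z • (1 : Matrix (Fin N) (Fin N) ℂ) - (V₀ : Matrix (Fin N) (Fin N) ℂ)).det)) := by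
      have : (fun k => (z • (1 : Matrix (Fin N) (Fin N) ℂ)
          - ((V (φ k) : Matrix (Fin N) (Fin N) ℂ))).det)
          = fun k => ∏ i, (z - e (lab (V (φ k)) i)) := funext fun k => heval _ z
      rwa [this] at hc2
    have hecont : Continuous fun x : ℝ => e x := by
      unfold e
      exact Complex.continuous_exp.comp (continuous_const.mul Complex.continuous_ofReal)
    have hc3 : Tendsto (fun k => ∏ i, (z - e (lab (V (φ k)) i))) atTop
        (𝓝 (∏ i, (z - e (μ i)))) :=
      tendsto_finset_prod _ fun i _ =>
        tendsto_const_nhds.sub ((hecont.tendsto _).comp (hcoord i))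
    have hfin := tendsto_nhds_unique hc2' hc3
    rw [← hfin, heval V₀ z]
  have hpoly : (∏ i, (X - C (e (lab V₀ i)))) = ∏ i, (X - C (e (μ i))) := by
    apply Polynomial.funext
    intro z
    simpa [Polynomial.eval_prod] using hdet z
  have hroots : ∀ u : Fin N → ℝ, (∏ i, (X - C (e (u i)))).roots
      = Multiset.map (fun i => e (u i)) Finset.univ.val := by
    intro u
    have hcomp : (fun i : Fin N => X - C (e (u i)))
        = (fun a : ℂ => X - C a) ∘ (fun i => e (u i)) := rfl
    rw [Finset.prod_eq_multiset_prod, hcomp, ← Multiset.map_map,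
      Polynomial.roots_multiset_prod_X_sub_C]
  have hmulti : Multiset.map (fun i => e (lab V₀ i)) Finset.univ.val
      = Multiset.map (fun i => e (μ i)) Finset.univ.val := by
    rw [← hroots (lab V₀), ← hroots μ, hpoly]
  have hVμ : lab V₀ = μ :=
    lab_uniq hN (lab V₀) μ (hlab V₀).1 (hlab V₀).2.1 (hlab V₀).2.2.1 hμs hμm hμw hmulti
  have hle : μ b ≤ μ a + c :=
    le_of_tendsto_of_tendsto' (hcoord b) ((hcoord a).add_const c) fun k => hVmem (φ k)
  show lab V₀ b ≤ lab V₀ a + c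
  rw [hVμ]
  exact hle

end OCA

/-- Let `N ≥ 2` and let `lab` be the eigenvalue labeling of `SU(N)`: for each
`V`, `lab V` sums to zero, is weakly decreasing, satisfies `lab V (N-1) ≥ lab V 0 − 1`, and the
characteristic polynomial of `V` is `∏ i, (X − e^{2πi · lab V i})`. For `j = 1, …, N−1` let
`O_j` be the set of `V` with `λ_j(V) > λ_{j+1}(V)`, and let `O_N` be the set of `V` with
`λ_N(V) > λ_1(V) − 1`. Then each `O_j` is open and `O_1 ∪ ⋯ ∪ O_N = SU(N)`. -/
theorem open_cover_O (N : ℕ) (hN : 2 ≤ N)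
    (lab : Matrix.specialUnitaryGroup (Fin N) ℂ → Fin N → ℝ)
    (hlab : ∀ V : Matrix.specialUnitaryGroup (Fin N) ℂ,
      (∑ i, lab V i = 0) ∧
      (∀ i j : Fin N, i ≤ j → lab V j ≤ lab V i) ∧
      (lab V ⟨0, by omega⟩ - 1 ≤ lab V ⟨N - 1, by omega⟩) ∧
      Matrix.charpoly (V : Matrix (Fin N) (Fin N) ℂ) =
        ∏ i, (Polynomial.X -
          Polynomial.C (Complex.exp (2 * Real.pi * Complex.I * (lab V i))))) :
    (∀ j : ℕ, (hj : j + 1 < N) →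
      IsOpen {V : Matrix.specialUnitaryGroup (Fin N) ℂ |
        lab V ⟨j + 1, hj⟩ < lab V ⟨j, by omega⟩}) ∧
    IsOpen {V : Matrix.specialUnitaryGroup (Fin N) ℂ |
      lab V ⟨0, by omega⟩ - 1 < lab V ⟨N - 1, by omega⟩} ∧
    ((⋃ (j : ℕ) (hj : j + 1 < N), {V : Matrix.specialUnitaryGroup (Fin N) ℂ |
        lab V ⟨j + 1, hj⟩ < lab V ⟨j, by omega⟩}) ∪
      {V : Matrix.specialUnitaryGroup (Fin N) ℂ |
        lab V ⟨0, by omega⟩ - 1 < lab V ⟨N - 1, by omega⟩} = Set.univ) := by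
  have hN0 : 0 < N := by omega
  refine ⟨?_, ?_, ?_⟩
  · intro j hj
    have h := OCA.isOpen_aux hN0 lab hlab ⟨j + 1, hj⟩ ⟨j, by omega⟩ 0
    have hset : {V : Matrix.specialUnitaryGroup (Fin N) ℂ | lab V ⟨j + 1, hj⟩ + 0 < lab V ⟨j, by omega⟩}
        = {V : Matrix.specialUnitaryGroup (Fin N) ℂ | lab V ⟨j + 1, hj⟩ < lab V ⟨j, by omega⟩} := by
      ext V; simp
    rwa [hset] at h
  · have h := OCA.isOpen_aux hN0 lab hlab ⟨0, hN0⟩ ⟨N - 1, by omega⟩ (-1)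
    have hset : {V : Matrix.specialUnitaryGroup (Fin N) ℂ | lab V ⟨0, hN0⟩ + (-1) < lab V ⟨N - 1, by omega⟩}
        = {V : Matrix.specialUnitaryGroup (Fin N) ℂ | lab V ⟨0, by omega⟩ - 1 < lab V ⟨N - 1, by omega⟩} := by
      ext V; simp [sub_eq_add_neg]
    rwa [hset] at h
  · rw [Set.eq_univ_iff_forall]
    intro V
    by_contra hc
    rw [Set.mem_union, not_or] at hc
    obtain ⟨hc1, hc2⟩ := hc
    rw [Set.mem_iUnion] at hc1
    push_neg at hc1
    simp only [Set.mem_iUnion, Set.mem_setOf_eq, not_exists, not_lt] at hc1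
    simp only [Set.mem_setOf_eq, not_lt] at hc2
    obtain ⟨hs, hm, hw, -⟩ := hlab V
    -- all labels are equal
    have hconst : ∀ k (hk : k < N), lab V ⟨k, hk⟩ = lab V ⟨0, hN0⟩ := by
      intro k
      induction k with
      | zero => intro hk; rfl
      | succ j ih =>
        intro hk
        have hjN : j < N := by omega
        have h1 : lab V ⟨j, hjN⟩ ≤ lab V ⟨j + 1, hk⟩ := hc1 j hk
        have h2 : lab V ⟨j + 1, hk⟩ ≤ lab V ⟨j, hjN⟩ := hm _ _ (by simp [Fin.le_def])
        rw [← ih hjN]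
        linarith
    have hall : ∀ i : Fin N, lab V i = lab V ⟨0, hN0⟩ := by
      intro i
      have := hconst i.val i.isLt
      simpa using this
    have hsum0 : lab V ⟨0, hN0⟩ = 0 := by
      have h1 : ∑ i, lab V i = ∑ _i : Fin N, lab V ⟨0, hN0⟩ :=
        Finset.sum_congr rfl fun i _ => hall i
      rw [hs, Finset.sum_const, Finset.card_univ, Fintype.card_fin, nsmul_eq_mul] at h1
      have hNpos : (0 : ℝ) < N := by exact_mod_cast hN0
      have h2 : (N : ℝ) * lab V ⟨0, hN0⟩ = 0 := h1.symm
      rcases mul_eq_zero.mp h2 with h | h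
      · exact absurd h hNpos.ne'
      · exact h
    have hlast : lab V ⟨N - 1, by omega⟩ = 0 := by rw [hall ⟨N - 1, by omega⟩, hsum0]
    rw [hlast] at hc2
    have : lab V ⟨0, hN0⟩ = lab V ⟨0, by omega⟩ := rfl
    rw [← this, hsum0] at hc2
    linarith
end

section
/- Let X be a topological space, Y ⊆ X a subspace, and N ≥ 2. Let U : X → U(N) be a continuous map with U|_Y ≡ 1 (the constant identity matrix on Y). Then U is homotopic rel Y, as a map into U(N), to a continuous map V : X → U(N) taking values in SU(N) with V|_Y ≡ 1, if and only if the map det∘U : X → U(1) is homotopic rel Y to the constant map 1. -/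
/-- `f` and `g` are homotopic rel `Y` through maps with values in `G ⊆ M`: there is a
continuous `H : X × [0,1] → M` with `H(·,0) = f`, `H(·,1) = g`, `H(y,s) = f y` for `y ∈ Y`,
and `H(x,s) ∈ G` throughout. -/
def HomotopicRelWithin {X M : Type*} [TopologicalSpace X] [TopologicalSpace M]
    (G : Set M) (f g : X → M) (Y : Set X) : Prop :=
  ∃ H : X × unitInterval → M, Continuous H ∧
    (∀ x, H (x, 0) = f x) ∧ (∀ x, H (x, 1) = g x) ∧
    (∀ y ∈ Y, ∀ s, H (y, s) = f y) ∧ (∀ x s, H (x, s) ∈ G)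

lemma norm_det_of_mem_unitary {N : ℕ} {A : Matrix (Fin N) (Fin N) ℂ}
    (hA : A ∈ Matrix.unitaryGroup (Fin N) ℂ) : ‖A.det‖ = 1 :=
  CStarRing.norm_of_mem_unitary (Matrix.det_of_mem_unitary hA)

lemma conj_mul_self_of_norm_one {z : ℂ} (hz : ‖z‖ = 1) : starRingEnd ℂ z * z = 1 := by
  rw [← Complex.normSq_eq_conj_mul_self, ← Complex.sq_norm, hz]
  norm_num

lemma diag_fun_eq_one {N : ℕ} {e : ℂ} (he : e = 1) (i : Fin N) :
    Matrix.diagonal (fun j => if j = i then e else 1) = (1 : Matrix (Fin N) (Fin N) ℂ) := by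
  have : (fun j => if j = i then e else 1) = fun _ : Fin N => (1 : ℂ) := by
    funext j; by_cases h : j = i <;> simp [h, he]
  rw [this, Matrix.diagonal_one]

lemma diag_mem_unitary {N : ℕ} {e : ℂ} (he : ‖e‖ = 1) (i : Fin N) :
    Matrix.diagonal (fun j => if j = i then e else 1) ∈ Matrix.unitaryGroup (Fin N) ℂ := by
  rw [Matrix.mem_unitaryGroup_iff']
  rw [Matrix.star_eq_conjTranspose, Matrix.diagonal_conjTranspose, Matrix.diagonal_mul_diagonal]
  ext j k
  by_cases hj : j = i <;> by_cases hk : j = k <;>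
    simp_all [Matrix.diagonal_apply, Matrix.one_apply, Pi.star_apply,
      conj_mul_self_of_norm_one he]

/-- Let `X` be a topological space, `Y ⊆ X`, `N ≥ 2`, and let
`U : X → U(N)` be continuous with `U ≡ 1` on `Y`. Then `U` is homotopic rel `Y`, as a map
into `U(N)`, to a continuous `SU(N)`-valued map `V` with `V ≡ 1` on `Y`, if and only if
`det ∘ U : X → U(1)` is homotopic rel `Y` to the constant map `1`. -/
theorem homotopic_to_specialUnitary_iff_det (N : ℕ) (hN : 2 ≤ N)
    (X : Type*) [TopologicalSpace X] (Y : Set X)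
    (U : X → Matrix (Fin N) (Fin N) ℂ) (hU : Continuous U)
    (hUmem : ∀ x, U x ∈ Matrix.unitaryGroup (Fin N) ℂ)
    (hUY : ∀ y ∈ Y, U y = 1) :
    (∃ V : X → Matrix (Fin N) (Fin N) ℂ, Continuous V ∧
      (∀ x, V x ∈ Matrix.specialUnitaryGroup (Fin N) ℂ) ∧ (∀ y ∈ Y, V y = 1) ∧
      HomotopicRelWithin (Matrix.unitaryGroup (Fin N) ℂ : Set _) U V Y) ↔
    HomotopicRelWithin {z : ℂ | ‖z‖ = 1} (fun x => (U x).det) (fun _ => 1) Y := by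
  have i0 : Fin N := ⟨0, by omega⟩
  constructor
  · rintro ⟨V, hV, hVmem, hVY, H, hH, h0, h1, hY, hmem⟩
    refine ⟨fun p => (H p).det, hH.matrix_det, fun x => by simp only [h0], fun x => ?_,
      fun y hy s => by simp only [hY y hy s], fun x s => norm_det_of_mem_unitary (hmem x s)⟩
    simp only [h1]
    exact ((Matrix.mem_specialUnitaryGroup_iff.mp (hVmem x)).2)
  · rintro ⟨h, hh, h0, h1, hY, hmem⟩
    simp only at h0 h1 hY
    -- correction diagonal entry: e (x,s) = conj (h (x,0)) * h (x,s)
    set e : X × unitInterval → ℂ := fun p => starRingEnd ℂ (h (p.1, 0)) * h p with he_def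
    have he_cont : Continuous e :=
      ((Complex.continuous_conj.comp (hh.comp (by fun_prop))).mul hh)
    have hnorm0 : ∀ x : X, ‖h (x, 0)‖ = 1 := fun x => hmem x 0
    have he_norm : ∀ p, ‖e p‖ = 1 := by
      intro p
      simp only [he_def, norm_mul, RCLike.norm_conj]
      rw [hnorm0 p.1, hmem p.1 p.2, one_mul]
    set D : X × unitInterval → Matrix (Fin N) (Fin N) ℂ :=
      fun p => Matrix.diagonal (fun j => if j = i0 then e p else 1) with hD_def
    have hD_cont : Continuous D := by
      apply Continuous.matrix_diagonal
      apply continuous_pi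
      intro j
      by_cases hj : j = i0 <;> simp [hj, he_cont, continuous_const]
    have hD_mem : ∀ p, D p ∈ Matrix.unitaryGroup (Fin N) ℂ :=
      fun p => diag_mem_unitary (he_norm p) i0
    have hD_det : ∀ p, (D p).det = e p := by
      intro p
      simp only [hD_def, Matrix.det_diagonal]
      rw [Finset.prod_ite_eq' Finset.univ i0 (fun _ => e p)]
      simp
    have hD0 : ∀ x, D (x, 0) = 1 := by
      intro x
      exact diag_fun_eq_one (conj_mul_self_of_norm_one (hnorm0 x)) i0
    have heY : ∀ y ∈ Y, ∀ s, e (y, s) = 1 := by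
      intro y hy s
      have hs : h (y, s) = h (y, 0) := by rw [hY y hy s, h0]
      simp only [he_def, hs]
      exact conj_mul_self_of_norm_one (hnorm0 y)
    have hDY : ∀ y ∈ Y, ∀ s, D (y, s) = 1 := fun y hy s => diag_fun_eq_one (heY y hy s) i0
    refine ⟨fun x => U x * D (x, 1), (hU.matrix_mul (hD_cont.comp (by fun_prop))),
      fun x => ?_, fun y hy => by simp only [hDY y hy 1, hUY y hy, mul_one],
      fun p => U p.1 * D p, (hU.comp continuous_fst).matrix_mul hD_cont,
      fun x => by simp only [hD0 x, mul_one], fun x => rfl,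
      fun y hy s => by simp only [hDY y hy s, mul_one], fun x s => mul_mem (hUmem x) (hD_mem (x, s))⟩
    rw [Matrix.mem_specialUnitaryGroup_iff]
    refine ⟨mul_mem (hUmem x) (hD_mem (x, 1)), ?_⟩
    rw [Matrix.det_mul, hD_det]
    simp only [he_def]
    rw [h1, mul_one, ← h0 x, mul_comm]
    exact conj_mul_self_of_norm_one (hnorm0 x)
end

section
/- Let T ⊂ SU(2) be the subgroup of diagonal matrices. The map SU(2) × T → SU(2), (g, h) ↦ g h g^{-1}, descends to a well-defined continuous map p : (SU(2)/T) × T → SU(2), where SU(2)/T carries the quotient topology. The restriction of p to the preimage of SU(2) \ {1, −1} is a double covering of SU(2) \ {1, −1}: it is a covering map onto SU(2) \ {1, −1} and every fiber over a point of SU(2) \ {1, −1} has exactly two elements. -/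
open Matrix Topology ComplexConjugate
noncomputable section

/-- The relation on `SU(2)` whose quotient is the left coset space `SU(2)/T`, where
`T ⊂ SU(2)` is the subgroup of diagonal matrices: `x ∼ y` iff `y = x·h` for some
diagonal `h ∈ SU(2)`. -/
def diagCosetRel2 (x y : Matrix.specialUnitaryGroup (Fin 2) ℂ) : Prop :=
  ∃ h : Matrix.specialUnitaryGroup (Fin 2) ℂ,
    (h : Matrix (Fin 2) (Fin 2) ℂ).IsDiag ∧ y = x * h

/-- The subgroup `T ⊂ SU(2)` of diagonal matrices, as a subspace. -/
def diagTorus2 : Type :=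
  {h : Matrix.specialUnitaryGroup (Fin 2) ℂ // (h : Matrix (Fin 2) (Fin 2) ℂ).IsDiag}

instance : TopologicalSpace diagTorus2 :=
  inferInstanceAs (TopologicalSpace
    {h : Matrix.specialUnitaryGroup (Fin 2) ℂ // (h : Matrix (Fin 2) (Fin 2) ℂ).IsDiag})

namespace SU2X

local notation "SU2" => Matrix.specialUnitaryGroup (Fin 2) ℂ

theorem mem_iff {A : Matrix (Fin 2) (Fin 2) ℂ} :
    A ∈ Matrix.specialUnitaryGroup (Fin 2) ℂ ↔ A * Aᴴ = 1 ∧ A.det = 1 := by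
  rw [Matrix.mem_specialUnitaryGroup_iff, Matrix.mem_unitaryGroup_iff]; rfl

theorem su2_entries {A : Matrix (Fin 2) (Fin 2) ℂ} (hA : A ∈ Matrix.specialUnitaryGroup (Fin 2) ℂ) :
    A 1 0 = -conj (A 0 1) ∧ A 1 1 = conj (A 0 0) ∧
      A 0 0 * conj (A 0 0) + A 0 1 * conj (A 0 1) = 1 := by
  obtain ⟨h1, h2⟩ := mem_iff.mp hA
  have hinv : A⁻¹ = Aᴴ := Matrix.inv_eq_right_inv h1
  have hadj : A⁻¹ = A.adjugate := by rw [Matrix.inv_def, h2]; simp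
  have he : Aᴴ = !![A 1 1, -A 0 1; -A 1 0, A 0 0] := by
    rw [← hinv, hadj, Matrix.adjugate_fin_two]
  have h00 : conj (A 0 0) = A 1 1 := by
    have := congrFun (congrFun he 0) 0; simpa using this
  have h10 : conj (A 1 0) = -A 0 1 := by
    have := congrFun (congrFun he 0) 1; simpa using this
  have hu : A 0 0 * conj (A 0 0) + A 0 1 * conj (A 0 1) = 1 := by
    have := congrFun (congrFun h1 0) 0
    simpa [Matrix.mul_apply, Fin.sum_univ_two, Matrix.one_apply] using this
  refine ⟨?_, h00.symm, hu⟩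
  have := congrArg conj h10
  simpa using this

theorem mk_mem {x y : ℂ} (h : x * conj x + y * conj y = 1) :
    !![x, -conj y; y, conj x] ∈ Matrix.specialUnitaryGroup (Fin 2) ℂ := by
  rw [mem_iff]
  constructor
  · ext i j
    fin_cases i <;> fin_cases j <;>
      simp [Matrix.mul_apply, Fin.sum_univ_two, Matrix.conjTranspose_apply, Matrix.one_apply] <;>
      ring_nf <;> try linear_combination h
  · rw [Matrix.det_fin_two_of]; linear_combination h

/-- Build an element of SU(2) from a unit first column. -/
def mkSU (x y : ℂ) (h : x * conj x + y * conj y = 1) : SU2 :=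
  ⟨!![x, -conj y; y, conj x], mk_mem h⟩

theorem star_mem {A : Matrix (Fin 2) (Fin 2) ℂ}
    (hA : A ∈ Matrix.specialUnitaryGroup (Fin 2) ℂ) :
    Aᴴ ∈ Matrix.specialUnitaryGroup (Fin 2) ℂ := by
  have h1 := (Matrix.mem_specialUnitaryGroup_iff.mp hA).1
  have h2 := (Matrix.mem_specialUnitaryGroup_iff.mp hA).2
  rw [mem_iff]
  constructor
  · rw [Matrix.conjTranspose_conjTranspose]
    exact Matrix.mem_unitaryGroup_iff'.mp h1
  · rw [Matrix.det_conjTranspose, h2]; simp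

theorem coe_mul (A B : SU2) : ((A * B : SU2) : Matrix (Fin 2) (Fin 2) ℂ) = A.1 * B.1 := rfl

theorem mul_starAux (A : SU2) : A.1 * A.1ᴴ = 1 := (mem_iff.mp A.2).1

theorem star_mulAux (A : SU2) : A.1ᴴ * A.1 = 1 := by
  exact Matrix.mem_unitaryGroup_iff'.mp (Matrix.mem_specialUnitaryGroup_iff.mp A.2).1

theorem isDiag_mul {A B : Matrix (Fin 2) (Fin 2) ℂ} (hA : A.IsDiag) (hB : B.IsDiag) :
    (A * B).IsDiag := by
  intro i j hij
  rw [Matrix.mul_apply]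
  apply Finset.sum_eq_zero
  intro k _
  by_cases hk : i = k
  · subst hk; rw [hB (by exact hij), mul_zero]
  · rw [hA (by exact hk), zero_mul]

theorem rel_equiv : Equivalence diagCosetRel2 := by
  constructor
  · intro x
    exact ⟨1, Matrix.isDiag_one, (mul_one x).symm⟩
  · rintro x y ⟨h, hd, rfl⟩
    refine ⟨⟨h.1ᴴ, star_mem h.2⟩, hd.conjTranspose, ?_⟩
    apply Subtype.ext
    rw [coe_mul, coe_mul]
    show x.1 = x.1 * h.1 * h.1ᴴ
    rw [Matrix.mul_assoc, mul_starAux h, Matrix.mul_one]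
  · rintro x y z ⟨h, hd, rfl⟩ ⟨h', hd', rfl⟩
    refine ⟨h * h', by rw [coe_mul]; exact isDiag_mul hd hd', by rw [mul_assoc]⟩


def tR (V : SU2) : ℝ := ((V : Matrix (Fin 2) (Fin 2) ℂ) 0 0).re
def sR (V : SU2) : ℝ := Real.sqrt (1 - tR V ^ 2)
def lam (V : SU2) : ℂ := ⟨tR V, sR V⟩

theorem sR_pos {V : SU2} (hV : tR V ^ 2 < 1) : 0 < sR V :=
  Real.sqrt_pos.mpr (by linarith)

theorem sR_sq {V : SU2} (hV : tR V ^ 2 < 1) : sR V ^ 2 = 1 - tR V ^ 2 :=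
  Real.sq_sqrt (by linarith)

theorem lam_unit {V : SU2} (hV : tR V ^ 2 < 1) : lam V * conj (lam V) = 1 := by
  rw [Complex.mul_conj]
  have h := sR_sq hV
  have : Complex.normSq (lam V) = 1 := by
    rw [Complex.normSq_apply]
    show tR V * tR V + sR V * sR V = 1
    nlinarith [sR_sq hV]
  rw [this]; norm_num

theorem lam_ne_conj {V : SU2} (hV : tR V ^ 2 < 1) : lam V ≠ conj (lam V) := by
  intro h
  have := congrArg Complex.im h
  simp only [Complex.conj_im] at this
  have hs := sR_pos hV
  have : sR V = -sR V := this
  linarith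

theorem lam_char {V : SU2} (hV : tR V ^ 2 < 1) :
    lam V ^ 2 - 2 * (tR V : ℂ) * lam V + 1 = 0 := by
  have hl : lam V = (tR V : ℂ) + (sR V : ℂ) * Complex.I := by
    apply Complex.ext <;> simp [lam]
  have hs : ((sR V : ℂ)) ^ 2 = 1 - (tR V : ℂ) ^ 2 := by
    have := congrArg (Complex.ofReal) (sR_sq hV)
    push_cast at this
    exact this
  rw [hl]
  linear_combination (sR V : ℂ) ^ 2 * Complex.I_sq - hs

theorem eig1 {a b l : ℂ} (hchar : l ^ 2 - (a + conj a) * l + 1 = 0)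
    (hunit : a * conj a + b * conj b = 1) :
    a * b + b * (l - a) = l * b ∧
    (-conj b) * b + conj a * (l - a) = l * (l - a) := by
  constructor
  · ring
  · linear_combination -hchar - hunit

theorem eig2 {a b l : ℂ} (hchar : l ^ 2 - (a + conj a) * l + 1 = 0)
    (hunit : a * conj a + b * conj b = 1) :
    a * (l - conj a) + b * (-conj b) = l * (l - conj a) ∧
    (-conj b) * (l - conj a) + conj a * (-conj b) = l * (-conj b) := by
  constructor
  · linear_combination -hchar - hunit
  · ring


end SU2X

namespace SU2X
local notation "SU2" => Matrix.specialUnitaryGroup (Fin 2) ℂ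

theorem conj_diag {x y : ℂ} (hxy : x * conj x + y * conj y = 1) {V : SU2} {l : ℂ}
    (h1 : (V : Matrix (Fin 2) (Fin 2) ℂ) 0 0 * x + (V : Matrix (Fin 2) (Fin 2) ℂ) 0 1 * y = l * x)
    (h2 : (V : Matrix (Fin 2) (Fin 2) ℂ) 1 0 * x + (V : Matrix (Fin 2) (Fin 2) ℂ) 1 1 * y = l * y) :
    (!![x, -conj y; y, conj x])ᴴ * (V : Matrix (Fin 2) (Fin 2) ℂ) * !![x, -conj y; y, conj x]
      = !![l, 0; 0, conj l] := by
  set A : Matrix (Fin 2) (Fin 2) ℂ := !![x, -conj y; y, conj x] with hA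
  set M : Matrix (Fin 2) (Fin 2) ℂ := Aᴴ * (V : Matrix (Fin 2) (Fin 2) ℂ) * A with hM
  have hMmem : M ∈ Matrix.specialUnitaryGroup (Fin 2) ℂ :=
    mul_mem (mul_mem (star_mem (mk_mem hxy)) V.2) (mk_mem hxy)
  obtain ⟨e10, e11, _⟩ := su2_entries hMmem
  have m00 : M 0 0 = l := by
    simp only [hM, hA, Matrix.mul_apply, Fin.sum_univ_two, Matrix.conjTranspose_apply,
      Matrix.cons_val', Matrix.cons_val_zero, Matrix.cons_val_one, Matrix.head_cons,
      Matrix.empty_val', Matrix.cons_val_fin_one, Matrix.head_fin_const, Matrix.of_apply,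
      Matrix.cons_val_zero, star_neg, Complex.star_def, Complex.conj_conj, map_neg]
    ring_nf
    linear_combination (starRingEnd ℂ x) * h1 + (starRingEnd ℂ y) * h2 + l * hxy
  have m10 : M 1 0 = 0 := by
    simp only [hM, hA, Matrix.mul_apply, Fin.sum_univ_two, Matrix.conjTranspose_apply,
      Matrix.cons_val', Matrix.cons_val_zero, Matrix.cons_val_one, Matrix.head_cons,
      Matrix.empty_val', Matrix.cons_val_fin_one, Matrix.head_fin_const, Matrix.of_apply,
      star_neg, Complex.star_def, Complex.conj_conj, map_neg]
    ring_nf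
    linear_combination (-y) * h1 + x * h2
  have m01 : M 0 1 = 0 := by
    have := e10
    rw [m10] at this
    have h0 : conj (M 0 1) = 0 := by
      have := this.symm
      simpa [neg_eq_zero] using this
    simpa using congrArg conj h0
  rw [Matrix.eta_fin_two M, m00, m10, m01, e11, m00]


theorem coset_of_conj {V g₁ g₂ : SU2} {al be : ℂ} (hne : al ≠ be)
    (h1 : (g₁.1)ᴴ * (V : Matrix (Fin 2) (Fin 2) ℂ) * g₁.1 = !![al, 0; 0, be])
    (h2 : (g₂.1)ᴴ * (V : Matrix (Fin 2) (Fin 2) ℂ) * g₂.1 = !![al, 0; 0, be]) :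
    diagCosetRel2 g₁ g₂ := by
  set K : Matrix (Fin 2) (Fin 2) ℂ := (g₁.1)ᴴ * g₂.1 with hK
  have e1 : K * ((g₂.1)ᴴ * V.1 * g₂.1) = (g₁.1)ᴴ * (V.1 * g₂.1) := by
    simp only [hK, Matrix.mul_assoc]
    rw [← Matrix.mul_assoc (g₂.1) ((g₂.1)ᴴ), mul_starAux, Matrix.one_mul]
  have e2 : ((g₁.1)ᴴ * V.1 * g₁.1) * K = (g₁.1)ᴴ * (V.1 * g₂.1) := by
    simp only [hK, Matrix.mul_assoc]
    rw [← Matrix.mul_assoc (g₁.1) ((g₁.1)ᴴ), mul_starAux, Matrix.one_mul]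
  rw [h2] at e1
  rw [h1] at e2
  have hcomm : K * !![al, 0; 0, be] = !![al, 0; 0, be] * K := e1.trans e2.symm
  have k01 : K 0 1 = 0 := by
    have hc := congrFun (congrFun hcomm 0) 1
    simp [Matrix.mul_apply, Fin.sum_univ_two] at hc
    have hz : (al - be) * K 0 1 = 0 := by linear_combination -hc
    rcases mul_eq_zero.mp hz with h | h
    · exact absurd (sub_eq_zero.mp h) hne
    · exact h
  have k10 : K 1 0 = 0 := by
    have hc := congrFun (congrFun hcomm 1) 0
    simp [Matrix.mul_apply, Fin.sum_univ_two] at hc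
    have hz : (al - be) * K 1 0 = 0 := by linear_combination hc
    rcases mul_eq_zero.mp hz with h | h
    · exact absurd (sub_eq_zero.mp h) hne
    · exact h
  have hKmem : K ∈ Matrix.specialUnitaryGroup (Fin 2) ℂ :=
    mul_mem (star_mem g₁.2) g₂.2
  refine ⟨⟨K, hKmem⟩, ?_, ?_⟩
  · intro i j hij
    fin_cases i <;> fin_cases j <;> first | exact absurd rfl hij | exact k01 | exact k10
  · apply Subtype.ext
    rw [coe_mul]
    show g₂.1 = g₁.1 * K
    rw [hK, ← Matrix.mul_assoc, mul_starAux, Matrix.one_mul]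

theorem isDiag_mk2 (m n : ℂ) : (!![m, 0; 0, n]).IsDiag := by
  intro i j hij
  fin_cases i <;> fin_cases j <;> simp_all

theorem diag_mem {m : ℂ} (hm : m * conj m = 1) :
    !![m, 0; 0, conj m] ∈ Matrix.specialUnitaryGroup (Fin 2) ℂ := by
  have := mk_mem (x := m) (y := 0) (by simpa using hm)
  simpa using this

def mkT (m : ℂ) (hm : m * conj m = 1) : diagTorus2 :=
  ⟨⟨!![m, 0; 0, conj m], diag_mem hm⟩, isDiag_mk2 m (conj m)⟩

theorem torus_form (h : diagTorus2) :
    (h.1 : Matrix (Fin 2) (Fin 2) ℂ) =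
      !![h.1.1 0 0, 0; 0, conj (h.1.1 0 0)] ∧ h.1.1 0 0 * conj (h.1.1 0 0) = 1 := by
  obtain ⟨e10, e11, hu⟩ := su2_entries h.1.2
  have h01 : h.1.1 0 1 = 0 := h.2 (by decide)
  constructor
  · rw [Matrix.eta_fin_two h.1.1, h01, e11, e10, h01]
    simp
  · simpa [h01] using hu


theorem isDiag_eta {A : Matrix (Fin 2) (Fin 2) ℂ} (hA : A.IsDiag) :
    A = !![A 0 0, 0; 0, A 1 1] := by
  conv_lhs => rw [Matrix.eta_fin_two A]
  rw [hA (show (0 : Fin 2) ≠ 1 by decide), hA (show (1 : Fin 2) ≠ 0 by decide)]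

theorem diag_comm {A B : Matrix (Fin 2) (Fin 2) ℂ} (hA : A.IsDiag) (hB : B.IsDiag) :
    A * B = B * A := by
  rw [isDiag_eta hA, isDiag_eta hB]
  ext i j
  fin_cases i <;> fin_cases j <;> simp [Matrix.mul_apply, Fin.sum_univ_two, mul_comm]

/-- The raw conjugation map. -/
def pRaw (g : SU2) (h : diagTorus2) : SU2 :=
  ⟨g.1 * h.1.1 * (g.1)ᴴ, mul_mem (mul_mem g.2 h.1.2) (star_mem g.2)⟩

theorem pRaw_well (h : diagTorus2) {g₁ g₂ : SU2} (hr : diagCosetRel2 g₁ g₂) :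
    pRaw g₁ h = pRaw g₂ h := by
  obtain ⟨k, hk, rfl⟩ := hr
  apply Subtype.ext
  show g₁.1 * h.1.1 * (g₁.1)ᴴ = ((g₁ * k).1) * h.1.1 * ((g₁ * k).1)ᴴ
  rw [coe_mul, Matrix.conjTranspose_mul]
  have hc : k.1 * h.1.1 = h.1.1 * k.1 := diag_comm hk h.2
  have key : k.1 * (h.1.1 * (k.1)ᴴ) = h.1.1 := by
    rw [← Matrix.mul_assoc, hc, Matrix.mul_assoc, mul_starAux k, Matrix.mul_one]
  simp only [Matrix.mul_assoc]
  rw [← Matrix.mul_assoc (h.1.1) ((k.1)ᴴ) ((g₁.1)ᴴ), ← Matrix.mul_assoc (k.1), key]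

/-- The descended map `p`. -/
def pQ (z : Quot diagCosetRel2 × diagTorus2) : SU2 :=
  Quot.liftOn z.1 (fun g => pRaw g z.2) (fun _ _ hr => pRaw_well z.2 hr)

theorem pQ_mk (g : SU2) (h : diagTorus2) : pQ (Quot.mk diagCosetRel2 g, h) = pRaw g h := rfl

/-- Inverse in the torus. -/
def Tinv (h : diagTorus2) : diagTorus2 :=
  ⟨⟨(h.1.1)ᴴ, star_mem h.1.2⟩, h.2.conjTranspose⟩

theorem mul_Tinv (g : SU2) (h : diagTorus2) : (g * h.1) * (Tinv h).1 = g := by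
  apply Subtype.ext
  rw [coe_mul, coe_mul]
  show g.1 * h.1.1 * (h.1.1)ᴴ = g.1
  rw [Matrix.mul_assoc, mul_starAux h.1, Matrix.mul_one]

theorem continuous_mul_right (h : SU2) : Continuous (fun g : SU2 => g * h) := by
  exact Continuous.subtype_mk (continuous_subtype_val.matrix_mul continuous_const) _

theorem isOpenMap_mk : IsOpenMap (Quot.mk diagCosetRel2) := by
  intro U hU
  rw [← isQuotientMap_quot_mk.isOpen_preimage]
  have hset : Quot.mk diagCosetRel2 ⁻¹' (Quot.mk diagCosetRel2 '' U) =
      ⋃ h : diagTorus2, (fun g : SU2 => g * h.1) ⁻¹' U := by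
    ext g
    simp only [Set.mem_preimage, Set.mem_image, Set.mem_iUnion]
    constructor
    · rintro ⟨u, hu, he⟩
      have hr : diagCosetRel2 u g := (rel_equiv.eqvGen_iff).mp (Quot.eq.mp he)
      obtain ⟨k, hk, rfl⟩ := hr
      refine ⟨Tinv ⟨k, hk⟩, ?_⟩
      show (u * k) * (Tinv ⟨k, hk⟩).1 ∈ U
      rw [mul_Tinv u ⟨k, hk⟩]
      exact hu
    · rintro ⟨h, hgh⟩
      refine ⟨g * h.1, hgh, Quot.sound ⟨Tinv h |>.1, (Tinv h).2, (mul_Tinv g h).symm⟩⟩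
  rw [hset]
  exact isOpen_iUnion fun h => (continuous_mul_right h.1).isOpen_preimage U hU

theorem continuous_pRaw : Continuous (fun z : SU2 × diagTorus2 => pRaw z.1 z.2) := by
  apply Continuous.subtype_mk
  have c1 : Continuous fun z : SU2 × diagTorus2 => (z.1 : Matrix (Fin 2) (Fin 2) ℂ) :=
    continuous_subtype_val.comp continuous_fst
  have c2 : Continuous fun z : SU2 × diagTorus2 => (z.2.1 : Matrix (Fin 2) (Fin 2) ℂ) :=
    continuous_subtype_val.comp (continuous_subtype_val.comp continuous_snd)
  exact (c1.matrix_mul c2).matrix_mul c1.matrix_conjTranspose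

theorem continuous_pQ : Continuous pQ := by
  have hoq : IsOpenQuotientMap (Quot.mk diagCosetRel2) :=
    ⟨Quot.exists_rep, continuous_quot_mk, isOpenMap_mk⟩
  have := (hoq.prodMap IsOpenQuotientMap.id).continuous_comp_iff (g := pQ)
  rw [← this]
  exact continuous_pRaw


theorem contAt_mk {X Y : Type*} [TopologicalSpace X] [TopologicalSpace Y] {p : Y → Prop}
    {f : X → Subtype p} {x : X} (h : ContinuousAt (fun x => (f x : Y)) x) :
    ContinuousAt f x := by
  have := (Topology.IsInducing.subtypeVal (t := setOf p)).continuousAt_iff (f := f) (x := x)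
  exact this.mpr h

theorem continuous_entry (i j : Fin 2) :
    Continuous fun V : SU2 => (V : Matrix (Fin 2) (Fin 2) ℂ) i j :=
  continuous_subtype_val.matrix_elem i j

theorem continuous_tR : Continuous tR :=
  Complex.continuous_re.comp (continuous_entry 0 0)

theorem continuous_sR : Continuous sR :=
  Real.continuous_sqrt.comp (continuous_const.sub (continuous_tR.pow 2))

theorem lam_eq : lam = fun V => (tR V : ℂ) + (sR V : ℂ) * Complex.I :=
  funext fun V => by apply Complex.ext <;> simp [lam]

theorem continuous_lam : Continuous lam := by
  rw [lam_eq]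
  exact (Complex.continuous_ofReal.comp continuous_tR).add
    ((Complex.continuous_ofReal.comp continuous_sR).mul continuous_const)

/-! ### Normalized eigenvector charts -/

def nrm (q : ℂ × ℂ) : ℝ := Real.sqrt (Complex.normSq q.1 + Complex.normSq q.2)

def qS (q : ℂ × ℂ) : ℂ × ℂ := if q = 0 then (1, 0) else q

theorem qS_eq {q : ℂ × ℂ} (h : q ≠ 0) : qS q = q := if_neg h

theorem qS_ne (q : ℂ × ℂ) : qS q ≠ 0 := by
  rw [qS]; split_ifs with h
  · intro hc
    exact one_ne_zero (congrArg Prod.fst hc)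
  · exact h

theorem nrm_pos {q : ℂ × ℂ} (h : q ≠ 0) : 0 < nrm q := by
  apply Real.sqrt_pos.mpr
  have hne : q.1 ≠ 0 ∨ q.2 ≠ 0 := by
    by_contra hc
    push_neg at hc
    exact h (Prod.ext_iff.mpr ⟨hc.1, hc.2⟩)
  rcases hne with h1 | h1
  · have := Complex.normSq_pos.mpr h1
    have := Complex.normSq_nonneg q.2
    linarith
  · have := Complex.normSq_pos.mpr h1
    have := Complex.normSq_nonneg q.1
    linarith

theorem nrm_sq (q : ℂ × ℂ) : nrm q ^ 2 = Complex.normSq q.1 + Complex.normSq q.2 :=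
  Real.sq_sqrt (add_nonneg (Complex.normSq_nonneg _) (Complex.normSq_nonneg _))

def xN (q : ℂ × ℂ) : ℂ := (qS q).1 / (nrm (qS q) : ℂ)
def yN (q : ℂ × ℂ) : ℂ := (qS q).2 / (nrm (qS q) : ℂ)

theorem unitN (q : ℂ × ℂ) : xN q * conj (xN q) + yN q * conj (yN q) = 1 := by
  have hq := qS_ne q
  have hn := nrm_pos hq
  rw [xN, yN, Complex.mul_conj, Complex.mul_conj]
  norm_cast
  rw [Complex.normSq_div, Complex.normSq_div, Complex.normSq_ofReal, ← add_div]
  rw [div_eq_one_iff_eq (by nlinarith)]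
  have := nrm_sq (qS q)
  nlinarith

def gOf (q : ℂ × ℂ) : SU2 :=
  ⟨!![xN q, -conj (yN q); yN q, conj (xN q)], mk_mem (unitN q)⟩

theorem gOf_conj {V : SU2} {q : ℂ × ℂ} {l : ℂ} (hq : q ≠ 0)
    (h1 : (V : Matrix (Fin 2) (Fin 2) ℂ) 0 0 * q.1 + (V : Matrix (Fin 2) (Fin 2) ℂ) 0 1 * q.2
      = l * q.1)
    (h2 : (V : Matrix (Fin 2) (Fin 2) ℂ) 1 0 * q.1 + (V : Matrix (Fin 2) (Fin 2) ℂ) 1 1 * q.2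
      = l * q.2) :
    ((gOf q).1)ᴴ * (V : Matrix (Fin 2) (Fin 2) ℂ) * (gOf q).1 = !![l, 0; 0, conj l] := by
  apply conj_diag (unitN q)
  · rw [xN, yN, qS_eq hq]
    linear_combination (1 / (nrm q : ℂ)) * h1
  · rw [xN, yN, qS_eq hq]
    linear_combination (1 / (nrm q : ℂ)) * h2

theorem continuous_nrm : Continuous nrm :=
  Real.continuous_sqrt.comp
    ((Complex.continuous_normSq.comp continuous_fst).add
      (Complex.continuous_normSq.comp continuous_snd))

theorem continuousAt_xN {q₀ : ℂ × ℂ} (h : q₀ ≠ 0) : ContinuousAt xN q₀ := by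
  have hopen : IsOpen {q : ℂ × ℂ | q ≠ 0} := isOpen_compl_singleton
  have hev : (fun q : ℂ × ℂ => q.1 / (nrm q : ℂ)) =ᶠ[nhds q₀] xN := by
    filter_upwards [hopen.mem_nhds h] with q hq
    rw [xN, qS_eq hq]
  refine ContinuousAt.congr ?_ hev
  exact ContinuousAt.div continuousAt_fst
    ((Complex.continuous_ofReal.comp continuous_nrm).continuousAt)
    (by exact_mod_cast (nrm_pos h).ne')

theorem continuousAt_yN {q₀ : ℂ × ℂ} (h : q₀ ≠ 0) : ContinuousAt yN q₀ := by
  have hopen : IsOpen {q : ℂ × ℂ | q ≠ 0} := isOpen_compl_singleton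
  have hev : (fun q : ℂ × ℂ => q.2 / (nrm q : ℂ)) =ᶠ[nhds q₀] yN := by
    filter_upwards [hopen.mem_nhds h] with q hq
    rw [yN, qS_eq hq]
  refine ContinuousAt.congr ?_ hev
  exact ContinuousAt.div continuousAt_snd
    ((Complex.continuous_ofReal.comp continuous_nrm).continuousAt)
    (by exact_mod_cast (nrm_pos h).ne')

theorem continuousAt_gOf {q₀ : ℂ × ℂ} (h : q₀ ≠ 0) : ContinuousAt gOf q₀ := by
  apply contAt_mk
  apply continuousAt_pi.mpr
  intro i
  apply continuousAt_pi.mpr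
  intro j
  have hx := continuousAt_xN h
  have hy := continuousAt_yN h
  have hconj : Continuous (conj : ℂ → ℂ) := RCLike.continuous_conj
  fin_cases i <;> fin_cases j <;> simp only [gOf, Matrix.cons_val_zero, Matrix.cons_val_one,
    Matrix.head_cons, Matrix.cons_val', Matrix.empty_val', Matrix.cons_val_fin_one,
    Matrix.head_fin_const, Matrix.of_apply, Fin.isValue]
  · exact hx
  · exact (hconj.continuousAt.comp hy).neg
  · exact hy
  · exact hconj.continuousAt.comp hx


/-! ### Eigenvectors -/

def aE (V : SU2) : ℂ := (V : Matrix (Fin 2) (Fin 2) ℂ) 0 0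
def bE (V : SU2) : ℂ := (V : Matrix (Fin 2) (Fin 2) ℂ) 0 1

def vec1 (V : SU2) : ℂ × ℂ := (bE V, lam V - aE V)
def vec2 (V : SU2) : ℂ × ℂ := (lam V - conj (aE V), -conj (bE V))

theorem continuous_vec1 : Continuous vec1 :=
  (continuous_entry 0 1).prodMk (continuous_lam.sub (continuous_entry 0 0))

theorem continuous_vec2 : Continuous vec2 :=
  (continuous_lam.sub (RCLike.continuous_conj.comp (continuous_entry 0 0))).prodMk
    (RCLike.continuous_conj.comp (continuous_entry 0 1)).neg

theorem char' {V : SU2} (hV : tR V ^ 2 < 1) :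
    lam V ^ 2 - (aE V + conj (aE V)) * lam V + 1 = 0 := by
  have h := lam_char hV
  have ha : aE V + conj (aE V) = ((2 * tR V : ℝ) : ℂ) := Complex.add_conj (aE V)
  rw [ha]
  push_cast
  linear_combination h

theorem eig_vec1 {V : SU2} (hV : tR V ^ 2 < 1) :
    (V : Matrix (Fin 2) (Fin 2) ℂ) 0 0 * (vec1 V).1 +
        (V : Matrix (Fin 2) (Fin 2) ℂ) 0 1 * (vec1 V).2 = lam V * (vec1 V).1 ∧
    (V : Matrix (Fin 2) (Fin 2) ℂ) 1 0 * (vec1 V).1 +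
        (V : Matrix (Fin 2) (Fin 2) ℂ) 1 1 * (vec1 V).2 = lam V * (vec1 V).2 := by
  obtain ⟨e10, e11, hu⟩ := su2_entries V.2
  rw [e10, e11]
  exact eig1 (char' hV) hu

theorem eig_vec2 {V : SU2} (hV : tR V ^ 2 < 1) :
    (V : Matrix (Fin 2) (Fin 2) ℂ) 0 0 * (vec2 V).1 +
        (V : Matrix (Fin 2) (Fin 2) ℂ) 0 1 * (vec2 V).2 = lam V * (vec2 V).1 ∧
    (V : Matrix (Fin 2) (Fin 2) ℂ) 1 0 * (vec2 V).1 +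
        (V : Matrix (Fin 2) (Fin 2) ℂ) 1 1 * (vec2 V).2 = lam V * (vec2 V).2 := by
  obtain ⟨e10, e11, hu⟩ := su2_entries V.2
  rw [e10, e11]
  exact eig2 (char' hV) hu

theorem vec_ne {V : SU2} (hV : tR V ^ 2 < 1) : vec1 V ≠ 0 ∨ vec2 V ≠ 0 := by
  by_contra hc
  push_neg at hc
  obtain ⟨h1, h2⟩ := hc
  have hb : bE V = 0 := congrArg Prod.fst h1
  have ha1 : lam V - aE V = 0 := congrArg Prod.snd h1
  have ha2 : lam V - conj (aE V) = 0 := congrArg Prod.fst h2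
  have e1 : lam V = aE V := by linear_combination ha1
  have e2 : lam V = conj (aE V) := by linear_combination ha2
  exact lam_ne_conj hV (e2.trans (congrArg conj e1).symm)

/-- The chart selection. -/
def gsel (V : SU2) : SU2 := if vec1 V = 0 then gOf (vec2 V) else gOf (vec1 V)

theorem gsel_conj {V : SU2} (hV : tR V ^ 2 < 1) :
    ((gsel V).1)ᴴ * (V : Matrix (Fin 2) (Fin 2) ℂ) * (gsel V).1
      = !![lam V, 0; 0, conj (lam V)] := by
  rw [gsel]
  split_ifs with h
  · rcases vec_ne hV with h2 | h2
    · exact absurd h h2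
    · exact gOf_conj h2 (eig_vec2 hV).1 (eig_vec2 hV).2
  · exact gOf_conj h (eig_vec1 hV).1 (eig_vec1 hV).2

/-- The Weyl element. -/
def wE : SU2 := ⟨!![0, -1; 1, 0], by
  have := mk_mem (x := 0) (y := 1) (by simp)
  simpa using this⟩

theorem w_conj (al be : ℂ) : (wE.1)ᴴ * !![al, 0; 0, be] * wE.1 = !![be, 0; 0, al] := by
  ext i j
  fin_cases i <;> fin_cases j <;>
    simp [wE, Matrix.mul_apply, Fin.sum_univ_two, Matrix.conjTranspose_apply]

theorem gw_conj {V g : SU2} {al be : ℂ}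
    (h : (g.1)ᴴ * (V : Matrix (Fin 2) (Fin 2) ℂ) * g.1 = !![al, 0; 0, be]) :
    ((g * wE).1)ᴴ * (V : Matrix (Fin 2) (Fin 2) ℂ) * (g * wE).1 = !![be, 0; 0, al] := by
  rw [coe_mul, Matrix.conjTranspose_mul]
  calc (wE.1)ᴴ * (g.1)ᴴ * V.1 * (g.1 * wE.1)
      = (wE.1)ᴴ * ((g.1)ᴴ * V.1 * g.1) * wE.1 := by simp only [Matrix.mul_assoc]
    _ = !![be, 0; 0, al] := by rw [h, w_conj]

theorem conj_inv {V g : SU2} {D : Matrix (Fin 2) (Fin 2) ℂ}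
    (h : (g.1)ᴴ * (V : Matrix (Fin 2) (Fin 2) ℂ) * g.1 = D) :
    (V : Matrix (Fin 2) (Fin 2) ℂ) = g.1 * D * (g.1)ᴴ := by
  rw [← h]
  simp only [Matrix.mul_assoc]
  rw [← Matrix.mul_assoc (g.1) ((g.1)ᴴ), mul_starAux, Matrix.one_mul, Matrix.mul_one]


/-! ### The good set -/

def Sgood : Set SU2 :=
  {V | (V : Matrix (Fin 2) (Fin 2) ℂ) ≠ 1 ∧ (V : Matrix (Fin 2) (Fin 2) ℂ) ≠ -1}

theorem neg_one_fin_two : (-1 : Matrix (Fin 2) (Fin 2) ℂ) = !![-1, 0; 0, -1] := by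
  ext i j
  fin_cases i <;> fin_cases j <;> simp [Matrix.one_apply]

theorem open_Sgood : IsOpen Sgood := by
  have he : Sgood = (fun V : SU2 => (V : Matrix (Fin 2) (Fin 2) ℂ)) ⁻¹'
      ({1, -1} : Set (Matrix (Fin 2) (Fin 2) ℂ))ᶜ := by
    ext V
    simp [Sgood, not_or]
  rw [he]
  have hf : ({1, -1} : Set (Matrix (Fin 2) (Fin 2) ℂ)).Finite := Set.toFinite _
  exact hf.isClosed.isOpen_compl.preimage continuous_subtype_val

theorem tR_lt {V : SU2} (h1 : (V : Matrix (Fin 2) (Fin 2) ℂ) ≠ 1)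
    (h2 : (V : Matrix (Fin 2) (Fin 2) ℂ) ≠ -1) : tR V ^ 2 < 1 := by
  obtain ⟨e10, e11, hu⟩ := su2_entries V.2
  rw [Complex.mul_conj, Complex.mul_conj] at hu
  have hr : Complex.normSq ((V : Matrix (Fin 2) (Fin 2) ℂ) 0 0) +
      Complex.normSq ((V : Matrix (Fin 2) (Fin 2) ℂ) 0 1) = 1 := by exact_mod_cast hu
  set a := (V : Matrix (Fin 2) (Fin 2) ℂ) 0 0 with ha
  set b := (V : Matrix (Fin 2) (Fin 2) ℂ) 0 1 with hb
  have hna : Complex.normSq a = a.re ^ 2 + a.im ^ 2 := by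
    rw [Complex.normSq_apply]; ring
  have hnb : 0 ≤ Complex.normSq b := Complex.normSq_nonneg b
  by_contra hc
  push_neg at hc
  have htR : tR V = a.re := rfl
  have h1' : tR V ^ 2 ≤ 1 := by rw [htR]; nlinarith
  have heq : tR V ^ 2 = 1 := le_antisymm h1' hc
  have him : a.im = 0 := by rw [htR] at heq; nlinarith
  have hbz : b = 0 := by
    apply Complex.normSq_eq_zero.mp
    rw [htR] at heq; nlinarith
  have haeq : a = ((a.re : ℝ) : ℂ) := by
    apply Complex.ext <;> simp [him]
  have hform : (V : Matrix (Fin 2) (Fin 2) ℂ) = !![a, 0; 0, conj a] := by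
    rw [Matrix.eta_fin_two (V : Matrix (Fin 2) (Fin 2) ℂ), e10, e11, ← ha, ← hb, hbz]
    simp
  have hre : a.re = 1 ∨ a.re = -1 := by
    rw [htR] at heq
    rcases mul_eq_zero.mp (show (a.re - 1) * (a.re + 1) = 0 by nlinarith) with h | h
    · left; linarith
    · right; linarith
  rcases hre with h | h
  · apply h1
    rw [hform, haeq, h]
    norm_num
    exact Matrix.one_fin_two.symm
  · apply h2
    rw [hform, haeq, h]
    norm_num
    exact neg_one_fin_two.symm

/-! ### Sections of the torus -/

def muSafe (V : SU2) : ℂ := if tR V ^ 2 < 1 then lam V else 1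

theorem muSafe_unit (V : SU2) : muSafe V * conj (muSafe V) = 1 := by
  rw [muSafe]; split_ifs with h
  · exact lam_unit h
  · simp

theorem muSafe_eq {V : SU2} (h : tR V ^ 2 < 1) : muSafe V = lam V := if_pos h

theorem muSafe_unit' (V : SU2) : conj (muSafe V) * conj (conj (muSafe V)) = 1 := by
  rw [Complex.conj_conj]
  linear_combination muSafe_unit V

def lamT (V : SU2) : diagTorus2 :=
  ⟨⟨!![muSafe V, 0; 0, conj (muSafe V)], diag_mem (muSafe_unit V)⟩, isDiag_mk2 _ _⟩

def lamT' (V : SU2) : diagTorus2 :=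
  ⟨⟨!![conj (muSafe V), 0; 0, conj (conj (muSafe V))], diag_mem (muSafe_unit' V)⟩,
    isDiag_mk2 _ _⟩

theorem open_S' : IsOpen {V : SU2 | tR V ^ 2 < 1} :=
  isOpen_lt (continuous_tR.pow 2) continuous_const

theorem continuousAt_muSafe {V₀ : SU2} (h : tR V₀ ^ 2 < 1) : ContinuousAt muSafe V₀ := by
  have hev : lam =ᶠ[nhds V₀] muSafe := by
    filter_upwards [open_S'.mem_nhds h] with V hV
    rw [muSafe, if_pos hV]
  exact continuous_lam.continuousAt.congr hev

theorem continuousAt_lamT {V₀ : SU2} (h : tR V₀ ^ 2 < 1) : ContinuousAt lamT V₀ := by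
  apply contAt_mk
  apply contAt_mk
  show ContinuousAt (fun V => !![muSafe V, 0; 0, conj (muSafe V)]) V₀
  apply continuousAt_pi.mpr
  intro i
  apply continuousAt_pi.mpr
  intro j
  have hm := continuousAt_muSafe h
  have hconj : Continuous (conj : ℂ → ℂ) := RCLike.continuous_conj
  fin_cases i <;> fin_cases j <;>
    simp only [Matrix.cons_val_zero, Matrix.cons_val_one, Matrix.head_cons, Matrix.cons_val',
      Matrix.empty_val', Matrix.cons_val_fin_one, Matrix.head_fin_const, Matrix.of_apply,
      Fin.isValue]
  · exact hm
  · exact continuousAt_const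
  · exact continuousAt_const
  · exact hconj.continuousAt.comp hm

theorem continuousAt_lamT' {V₀ : SU2} (h : tR V₀ ^ 2 < 1) : ContinuousAt lamT' V₀ := by
  apply contAt_mk
  apply contAt_mk
  show ContinuousAt (fun V => !![conj (muSafe V), 0; 0, conj (conj (muSafe V))]) V₀
  apply continuousAt_pi.mpr
  intro i
  apply continuousAt_pi.mpr
  intro j
  have hm := continuousAt_muSafe h
  have hconj : Continuous (conj : ℂ → ℂ) := RCLike.continuous_conj
  fin_cases i <;> fin_cases j <;>
    simp only [Matrix.cons_val_zero, Matrix.cons_val_one, Matrix.head_cons, Matrix.cons_val',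
      Matrix.empty_val', Matrix.cons_val_fin_one, Matrix.head_fin_const, Matrix.of_apply,
      Fin.isValue]
  · exact hconj.continuousAt.comp hm
  · exact continuousAt_const
  · exact continuousAt_const
  · exact hconj.continuousAt.comp (hconj.continuousAt.comp hm)


/-! ### Continuity of the quotient-valued sections -/

theorem quot_eq_charts {V : SU2} (hV : tR V ^ 2 < 1) (h1 : vec1 V ≠ 0) (h2 : vec2 V ≠ 0) :
    Quot.mk diagCosetRel2 (gOf (vec1 V)) = Quot.mk diagCosetRel2 (gOf (vec2 V)) :=
  Quot.sound (coset_of_conj (lam_ne_conj hV)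
    (gOf_conj h1 (eig_vec1 hV).1 (eig_vec1 hV).2)
    (gOf_conj h2 (eig_vec2 hV).1 (eig_vec2 hV).2))

theorem quot_eq_charts' {V : SU2} (hV : tR V ^ 2 < 1) (h1 : vec1 V ≠ 0) (h2 : vec2 V ≠ 0) :
    Quot.mk diagCosetRel2 (gOf (vec1 V) * wE) = Quot.mk diagCosetRel2 (gOf (vec2 V) * wE) :=
  Quot.sound (coset_of_conj (Ne.symm (lam_ne_conj hV))
    (gw_conj (gOf_conj h1 (eig_vec1 hV).1 (eig_vec1 hV).2))
    (gw_conj (gOf_conj h2 (eig_vec2 hV).1 (eig_vec2 hV).2)))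

def phiT (V : SU2) : Quot diagCosetRel2 := Quot.mk diagCosetRel2 (gsel V)
def phiF (V : SU2) : Quot diagCosetRel2 := Quot.mk diagCosetRel2 (gsel V * wE)

theorem continuousAt_phiT {V₀ : SU2} (h : tR V₀ ^ 2 < 1) : ContinuousAt phiT V₀ := by
  by_cases h1 : vec1 V₀ ≠ 0
  · have hopen : IsOpen {V : SU2 | vec1 V ≠ 0} :=
      (isOpen_compl_singleton).preimage continuous_vec1
    have hev : (fun V => Quot.mk diagCosetRel2 (gOf (vec1 V))) =ᶠ[nhds V₀] phiT := by
      filter_upwards [hopen.mem_nhds h1] with V hv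
      rw [phiT, gsel, if_neg hv]
    exact (continuous_quot_mk.continuousAt.comp
      ((continuousAt_gOf h1).comp continuous_vec1.continuousAt)).congr hev
  · push_neg at h1
    have h2 : vec2 V₀ ≠ 0 := by
      rcases vec_ne h with hx | hx
      · exact absurd h1 hx
      · exact hx
    have hopen : IsOpen ({V : SU2 | vec2 V ≠ 0} ∩ {V | tR V ^ 2 < 1}) :=
      ((isOpen_compl_singleton).preimage continuous_vec2).inter open_S'
    have hev : (fun V => Quot.mk diagCosetRel2 (gOf (vec2 V))) =ᶠ[nhds V₀] phiT := by
      filter_upwards [hopen.mem_nhds ⟨h2, h⟩] with V hv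
      by_cases hv1 : vec1 V = 0
      · rw [phiT, gsel, if_pos hv1]
      · rw [phiT, gsel, if_neg hv1, ← quot_eq_charts hv.2 hv1 hv.1]
    exact (continuous_quot_mk.continuousAt.comp
      ((continuousAt_gOf h2).comp continuous_vec2.continuousAt)).congr hev

theorem continuousAt_phiF {V₀ : SU2} (h : tR V₀ ^ 2 < 1) : ContinuousAt phiF V₀ := by
  have hmw : Continuous fun g : SU2 => g * wE := continuous_mul_right wE
  by_cases h1 : vec1 V₀ ≠ 0
  · have hopen : IsOpen {V : SU2 | vec1 V ≠ 0} :=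
      (isOpen_compl_singleton).preimage continuous_vec1
    have hev : (fun V => Quot.mk diagCosetRel2 (gOf (vec1 V) * wE)) =ᶠ[nhds V₀] phiF := by
      filter_upwards [hopen.mem_nhds h1] with V hv
      rw [phiF, gsel, if_neg hv]
    exact (continuous_quot_mk.continuousAt.comp (hmw.continuousAt.comp
      ((continuousAt_gOf h1).comp continuous_vec1.continuousAt))).congr hev
  · push_neg at h1
    have h2 : vec2 V₀ ≠ 0 := by
      rcases vec_ne h with hx | hx
      · exact absurd h1 hx
      · exact hx
    have hopen : IsOpen ({V : SU2 | vec2 V ≠ 0} ∩ {V | tR V ^ 2 < 1}) :=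
      ((isOpen_compl_singleton).preimage continuous_vec2).inter open_S'
    have hev : (fun V => Quot.mk diagCosetRel2 (gOf (vec2 V) * wE)) =ᶠ[nhds V₀] phiF := by
      filter_upwards [hopen.mem_nhds ⟨h2, h⟩] with V hv
      by_cases hv1 : vec1 V = 0
      · rw [phiF, gsel, if_pos hv1]
      · rw [phiF, gsel, if_neg hv1, ← quot_eq_charts' hv.2 hv1 hv.1]
    exact (continuous_quot_mk.continuousAt.comp (hmw.continuousAt.comp
      ((continuousAt_gOf h2).comp continuous_vec2.continuousAt))).congr hev


/-! ### Fiber analysis -/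

theorem conj_back (g : SU2) (h : diagTorus2) :
    ((g.1)ᴴ * ((pQ (Quot.mk diagCosetRel2 g, h)) : Matrix (Fin 2) (Fin 2) ℂ) * g.1)
      = (h.1 : Matrix (Fin 2) (Fin 2) ℂ) := by
  show (g.1)ᴴ * (g.1 * (h.1 : Matrix (Fin 2) (Fin 2) ℂ) * (g.1)ᴴ) * g.1
      = (h.1 : Matrix (Fin 2) (Fin 2) ℂ)
  simp only [Matrix.mul_assoc]
  rw [star_mulAux, Matrix.mul_one, ← Matrix.mul_assoc, star_mulAux, Matrix.one_mul]

theorem lamT_coe {V : SU2} (h : tR V ^ 2 < 1) :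
    ((lamT V).1 : Matrix (Fin 2) (Fin 2) ℂ) = !![lam V, 0; 0, conj (lam V)] := by
  show !![muSafe V, 0; 0, conj (muSafe V)] = _
  rw [muSafe_eq h]

theorem lamT'_coe {V : SU2} (h : tR V ^ 2 < 1) :
    ((lamT' V).1 : Matrix (Fin 2) (Fin 2) ℂ) = !![conj (lam V), 0; 0, lam V] := by
  show !![conj (muSafe V), 0; 0, conj (conj (muSafe V))] = _
  rw [muSafe_eq h, Complex.conj_conj]

theorem pQ_true {V : SU2} (h : tR V ^ 2 < 1) : pQ (phiT V, lamT V) = V := by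
  apply Subtype.ext
  show (gsel V).1 * ((lamT V).1 : Matrix (Fin 2) (Fin 2) ℂ) * ((gsel V).1)ᴴ
      = (V : Matrix (Fin 2) (Fin 2) ℂ)
  rw [lamT_coe h]
  exact (conj_inv (gsel_conj h)).symm

theorem pQ_false {V : SU2} (h : tR V ^ 2 < 1) : pQ (phiF V, lamT' V) = V := by
  apply Subtype.ext
  show (gsel V * wE).1 * ((lamT' V).1 : Matrix (Fin 2) (Fin 2) ℂ) * ((gsel V * wE).1)ᴴ
      = (V : Matrix (Fin 2) (Fin 2) ℂ)
  rw [lamT'_coe h]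
  exact (conj_inv (gw_conj (gsel_conj h))).symm

theorem fiber_struct {g : SU2} {h : diagTorus2}
    (hg : pQ (Quot.mk diagCosetRel2 g, h) ∈ Sgood) :
    (0 < (((h.1 : Matrix (Fin 2) (Fin 2) ℂ)) 0 0).im ∧
        h = lamT (pQ (Quot.mk diagCosetRel2 g, h)) ∧
        phiT (pQ (Quot.mk diagCosetRel2 g, h)) = Quot.mk diagCosetRel2 g) ∨
    ((((h.1 : Matrix (Fin 2) (Fin 2) ℂ)) 0 0).im < 0 ∧
        h = lamT' (pQ (Quot.mk diagCosetRel2 g, h)) ∧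
        phiF (pQ (Quot.mk diagCosetRel2 g, h)) = Quot.mk diagCosetRel2 g) := by
  set V := pQ (Quot.mk diagCosetRel2 g, h) with hV
  obtain ⟨hform, hμu⟩ := torus_form h
  set μ := (h.1 : Matrix (Fin 2) (Fin 2) ℂ) 0 0 with hμ
  have hS' : tR V ^ 2 < 1 := tR_lt hg.1 hg.2
  have hconj : (g.1)ᴴ * (V : Matrix (Fin 2) (Fin 2) ℂ) * g.1 = (h.1 : Matrix (Fin 2) (Fin 2) ℂ) :=
    conj_back g h
  have t1 : Matrix.trace ((h.1 : Matrix (Fin 2) (Fin 2) ℂ))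
      = Matrix.trace ((V : Matrix (Fin 2) (Fin 2) ℂ)) := by
    rw [← hconj, Matrix.trace_mul_cycle, mul_starAux, Matrix.one_mul]
  rw [hform, Matrix.trace_fin_two, Matrix.trace_fin_two] at t1
  have t1' : μ + conj μ = (V : Matrix (Fin 2) (Fin 2) ℂ) 0 0
      + (V : Matrix (Fin 2) (Fin 2) ℂ) 1 1 := by
    have e0 : (!![μ, 0; 0, conj μ] : Matrix (Fin 2) (Fin 2) ℂ) 0 0 = μ := by simp
    have e1 : (!![μ, 0; 0, conj μ] : Matrix (Fin 2) (Fin 2) ℂ) 1 1 = conj μ := by simp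
    rw [e0, e1] at t1
    exact t1
  have e11V : (V : Matrix (Fin 2) (Fin 2) ℂ) 1 1 = conj ((V : Matrix (Fin 2) (Fin 2) ℂ) 0 0) :=
    (su2_entries V.2).2.1
  have hre : μ.re = tR V := by
    have hc := congrArg Complex.re t1'
    rw [e11V] at hc
    simp only [Complex.add_re, Complex.conj_re] at hc
    have : tR V = ((V : Matrix (Fin 2) (Fin 2) ℂ) 0 0).re := rfl
    linarith
  have hnμ : μ.re ^ 2 + μ.im ^ 2 = 1 := by
    have hu2 := hμu
    rw [Complex.mul_conj] at hu2
    have h2 : Complex.normSq μ = 1 := by exact_mod_cast hu2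
    rw [Complex.normSq_apply] at h2
    nlinarith
  have him2 : μ.im ^ 2 = sR V ^ 2 := by
    rw [sR_sq hS']
    have hq : μ.re ^ 2 = tR V ^ 2 := by rw [hre]
    linarith
  have hfac : (μ.im - sR V) * (μ.im + sR V) = 0 := by nlinarith
  have hs := sR_pos hS'
  rcases mul_eq_zero.mp hfac with hcase | hcase
  · have him : μ.im = sR V := by linarith
    have hμlam : μ = lam V := Complex.ext hre him
    left
    refine ⟨by rw [him]; exact hs, ?_, ?_⟩
    · apply Subtype.ext
      apply Subtype.ext
      show (h.1 : Matrix (Fin 2) (Fin 2) ℂ) = !![muSafe V, 0; 0, conj (muSafe V)]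
      rw [hform, hμlam, muSafe_eq hS']
    · exact Quot.sound (coset_of_conj (lam_ne_conj hS') (gsel_conj hS')
        (hconj.trans (by rw [hform, hμlam])))
  · have him : μ.im = -sR V := by linarith
    have hμlam : μ = conj (lam V) := by
      apply Complex.ext
      · rw [Complex.conj_re]; exact hre
      · rw [Complex.conj_im]; exact him
    right
    refine ⟨by rw [him]; linarith, ?_, ?_⟩
    · apply Subtype.ext
      apply Subtype.ext
      show (h.1 : Matrix (Fin 2) (Fin 2) ℂ)
          = !![conj (muSafe V), 0; 0, conj (conj (muSafe V))]
      rw [hform, hμlam, muSafe_eq hS', Complex.conj_conj]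
    · exact Quot.sound (coset_of_conj (Ne.symm (lam_ne_conj hS'))
        (gw_conj (gsel_conj hS'))
        (hconj.trans (by rw [hform, hμlam, Complex.conj_conj])))

theorem im_ne {g : SU2} {h : diagTorus2} (hg : pQ (Quot.mk diagCosetRel2 g, h) ∈ Sgood) :
    (((h.1 : Matrix (Fin 2) (Fin 2) ℂ)) 0 0).im ≠ 0 := by
  rcases fiber_struct hg with ⟨hp, _, _⟩ | ⟨hp, _, _⟩
  · exact ne_of_gt hp
  · exact ne_of_lt hp


/-! ### The trivialization -/

theorem continuous_imEnt :
    Continuous fun z : Quot diagCosetRel2 × diagTorus2 =>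
      (((z.2.1 : Matrix (Fin 2) (Fin 2) ℂ)) 0 0).im :=
  Complex.continuous_im.comp
    ((continuous_subtype_val.comp (continuous_subtype_val.comp continuous_snd)).matrix_elem 0 0)

def trivSU : Bundle.Trivialization Bool pQ where
  toFun z := (pQ z, decide (0 < (((z.2.1 : Matrix (Fin 2) (Fin 2) ℂ)) 0 0).im))
  invFun y := (if y.2 then phiT y.1 else phiF y.1, if y.2 then lamT y.1 else lamT' y.1)
  source := pQ ⁻¹' Sgood
  target := Sgood ×ˢ Set.univ
  map_source' z hz := ⟨hz, Set.mem_univ _⟩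
  map_target' y hy := by
    have hS' : tR y.1 ^ 2 < 1 := tR_lt hy.1.1 hy.1.2
    obtain ⟨V, b⟩ := y
    have hS'' : tR V ^ 2 < 1 := hS'
    have hV : V ∈ Sgood := hy.1
    show pQ _ ∈ Sgood
    cases b
    · simp only [Bool.false_eq_true, if_false]
      rw [pQ_false hS'']
      exact hV
    · simp only [if_true]
      rw [pQ_true hS'']
      exact hV
  left_inv' z hz := by
    obtain ⟨q, h⟩ := z
    obtain ⟨g, rfl⟩ := Quot.exists_rep q
    have hz' : pQ (Quot.mk diagCosetRel2 g, h) ∈ Sgood := hz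
    rcases fiber_struct hz' with ⟨hp, hh, hq⟩ | ⟨hp, hh, hq⟩
    · have hd : decide (0 < (((h.1 : Matrix (Fin 2) (Fin 2) ℂ)) 0 0).im) = true :=
        decide_eq_true hp
      simp only [hd, if_true]
      exact Prod.ext_iff.mpr ⟨hq, hh.symm⟩
    · have hd : decide (0 < (((h.1 : Matrix (Fin 2) (Fin 2) ℂ)) 0 0).im) = false :=
        decide_eq_false (not_lt.mpr hp.le)
      simp only [hd, if_false, Bool.false_eq_true]
      exact Prod.ext_iff.mpr ⟨hq, hh.symm⟩
  right_inv' y hy := by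
    have hS' : tR y.1 ^ 2 < 1 := tR_lt hy.1.1 hy.1.2
    obtain ⟨V, b⟩ := y
    have hS'' : tR V ^ 2 < 1 := hS'
    cases b
    · simp only [if_false, Bool.false_eq_true]
      refine Prod.ext_iff.mpr ⟨pQ_false hS'', ?_⟩
      have he : (((lamT' V).1 : Matrix (Fin 2) (Fin 2) ℂ)) 0 0 = conj (lam V) := by
        rw [lamT'_coe hS'']
        simp
      rw [he]
      apply decide_eq_false
      rw [not_lt, Complex.conj_im]
      have := sR_pos hS''
      show -(lam V).im ≤ 0
      have him : (lam V).im = sR V := rfl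
      linarith
    · simp only [if_true]
      refine Prod.ext_iff.mpr ⟨pQ_true hS'', ?_⟩
      have he : (((lamT V).1 : Matrix (Fin 2) (Fin 2) ℂ)) 0 0 = lam V := by
        rw [lamT_coe hS'']
        simp
      rw [he]
      apply decide_eq_true
      show (0 : ℝ) < (lam V).im
      have him : (lam V).im = sR V := rfl
      rw [him]
      exact sR_pos hS''
  open_source := open_Sgood.preimage continuous_pQ
  open_target := (open_Sgood.prod isOpen_univ)
  continuousOn_toFun := by
    apply continuousOn_of_forall_continuousAt
    intro z hz
    apply ContinuousAt.prodMk continuous_pQ.continuousAt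
    obtain ⟨q, h⟩ := z
    obtain ⟨g, rfl⟩ := Quot.exists_rep q
    have him := im_ne hz
    rcases lt_or_gt_of_ne him with hlt | hgt
    · have hopen : IsOpen {w : Quot diagCosetRel2 × diagTorus2 |
          (((w.2.1 : Matrix (Fin 2) (Fin 2) ℂ)) 0 0).im < 0} :=
        isOpen_lt continuous_imEnt continuous_const
      have hev : (fun _ : Quot diagCosetRel2 × diagTorus2 => false)
          =ᶠ[nhds (Quot.mk diagCosetRel2 g, h)]
          fun w => decide (0 < (((w.2.1 : Matrix (Fin 2) (Fin 2) ℂ)) 0 0).im) := by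
        filter_upwards [hopen.mem_nhds hlt] with w hw
        exact (decide_eq_false (not_lt.mpr hw.le)).symm
      exact continuousAt_const.congr hev
    · have hopen : IsOpen {w : Quot diagCosetRel2 × diagTorus2 |
          0 < (((w.2.1 : Matrix (Fin 2) (Fin 2) ℂ)) 0 0).im} :=
        isOpen_lt continuous_const continuous_imEnt
      have hev : (fun _ : Quot diagCosetRel2 × diagTorus2 => true)
          =ᶠ[nhds (Quot.mk diagCosetRel2 g, h)]
          fun w => decide (0 < (((w.2.1 : Matrix (Fin 2) (Fin 2) ℂ)) 0 0).im) := by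
        filter_upwards [hopen.mem_nhds hgt] with w hw
        exact (decide_eq_true hw).symm
      exact continuousAt_const.congr hev
  continuousOn_invFun := by
    apply continuousOn_of_forall_continuousAt
    intro y hy
    have hS' : tR y.1 ^ 2 < 1 := tR_lt hy.1.1 hy.1.2
    have hbopen : IsOpen {w : Matrix.specialUnitaryGroup (Fin 2) ℂ × Bool | w.2 = y.2} :=
      (isOpen_discrete {y.2}).preimage continuous_snd
    have hev : (fun w : Matrix.specialUnitaryGroup (Fin 2) ℂ × Bool =>
        ((if y.2 then phiT w.1 else phiF w.1), if y.2 then lamT w.1 else lamT' w.1))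
        =ᶠ[nhds y] fun w =>
        ((if w.2 then phiT w.1 else phiF w.1), if w.2 then lamT w.1 else lamT' w.1) := by
      filter_upwards [hbopen.mem_nhds rfl] with w hw
      rw [hw]
    refine ContinuousAt.congr ?_ hev
    rcases Bool.eq_false_or_eq_true y.2 with hb | hb <;> rw [hb] <;>
      simp only [if_true, if_false, Bool.false_eq_true]
    · exact ((continuousAt_phiT hS').comp continuousAt_fst).prodMk
        ((continuousAt_lamT hS').comp continuousAt_fst)
    · exact ((continuousAt_phiF hS').comp continuousAt_fst).prodMk
        ((continuousAt_lamT' hS').comp continuousAt_fst)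
  baseSet := Sgood
  open_baseSet := open_Sgood
  source_eq := rfl
  target_eq := rfl
  proj_toFun z hz := rfl

theorem lamT_ne {V : SU2} (hS' : tR V ^ 2 < 1) : lamT V ≠ lamT' V := by
  intro hc
  have h0 := congrArg (fun t : diagTorus2 => ((t.1 : Matrix (Fin 2) (Fin 2) ℂ)) 0 0) hc
  simp only [lamT, lamT'] at h0
  have h1 : muSafe V = conj (muSafe V) := by simpa using h0
  rw [muSafe_eq hS'] at h1
  exact lam_ne_conj hS' h1

theorem fiber_eq {V : SU2} (hV : V ∈ Sgood) :
    pQ ⁻¹' {V} = {(phiT V, lamT V), (phiF V, lamT' V)} := by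
  have hS' : tR V ^ 2 < 1 := tR_lt hV.1 hV.2
  ext z
  simp only [Set.mem_preimage, Set.mem_singleton_iff, Set.mem_insert_iff]
  constructor
  · intro hz
    obtain ⟨q, h⟩ := z
    obtain ⟨g, rfl⟩ := Quot.exists_rep q
    have hz' : pQ (Quot.mk diagCosetRel2 g, h) ∈ Sgood := by rw [hz]; exact hV
    rcases fiber_struct hz' with ⟨_, hh, hq⟩ | ⟨_, hh, hq⟩
    · left
      rw [hz] at hq hh
      exact Prod.ext_iff.mpr ⟨hq.symm, hh⟩
    · right
      rw [hz] at hq hh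
      exact Prod.ext_iff.mpr ⟨hq.symm, hh⟩
  · rintro (h | h) <;> rw [h]
    · exact pQ_true hS'
    · exact pQ_false hS'

theorem fiber_ncard {V : SU2} (hV : V ∈ Sgood) : (pQ ⁻¹' {V}).ncard = 2 := by
  have hS' : tR V ^ 2 < 1 := tR_lt hV.1 hV.2
  rw [fiber_eq hV]
  apply Set.ncard_pair
  intro hc
  exact lamT_ne hS' (congrArg Prod.snd hc)

end SU2X

/-- The map `SU(2) × T → SU(2)`, `(g, h) ↦ g h g⁻¹`, descends to a
well-defined continuous map `p : (SU(2)/T) × T → SU(2)`, and the restriction of `p` over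
`SU(2) \ {1, −1}` is a double covering: a covering map onto `SU(2) \ {1, −1}` each of whose
fibers has exactly two elements. -/
theorem su2_adjoint_double_covering :
    ∃ p : Quot diagCosetRel2 × diagTorus2 → Matrix.specialUnitaryGroup (Fin 2) ℂ,
      Continuous p ∧
      (∀ (g : Matrix.specialUnitaryGroup (Fin 2) ℂ) (h : diagTorus2),
        (p (Quot.mk diagCosetRel2 g, h) : Matrix (Fin 2) (Fin 2) ℂ) =
          (g : Matrix (Fin 2) (Fin 2) ℂ) * (h.1 : Matrix (Fin 2) (Fin 2) ℂ) *
            (g : Matrix (Fin 2) (Fin 2) ℂ)⁻¹) ∧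
      IsCoveringMapOn p {V : Matrix.specialUnitaryGroup (Fin 2) ℂ |
        (V : Matrix (Fin 2) (Fin 2) ℂ) ≠ 1 ∧ (V : Matrix (Fin 2) (Fin 2) ℂ) ≠ -1} ∧
      (∀ V : Matrix.specialUnitaryGroup (Fin 2) ℂ,
        (V : Matrix (Fin 2) (Fin 2) ℂ) ≠ 1 → (V : Matrix (Fin 2) (Fin 2) ℂ) ≠ -1 →
          (p ⁻¹' {V}).ncard = 2) := by
  refine ⟨SU2X.pQ, SU2X.continuous_pQ, ?_, ?_, ?_⟩
  · intro g h
    show (g : Matrix (Fin 2) (Fin 2) ℂ) * (h.1 : Matrix (Fin 2) (Fin 2) ℂ)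
        * ((g : Matrix (Fin 2) (Fin 2) ℂ))ᴴ = _
    rw [Matrix.inv_eq_right_inv (SU2X.mul_starAux g)]
  · intro V hV
    exact IsEvenlyCovered.to_isEvenlyCovered_preimage
      (IsEvenlyCovered.of_trivialization (t := SU2X.trivSU) (hV : V ∈ SU2X.Sgood))
  · intro V h1 h2
    exact SU2X.fiber_ncard ⟨h1, h2⟩
end
end
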